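/- arXiv:2101.04587 — 3 statements merged into one kernel-verified Lean document; each statement's English description precedes it below -/
import Mathlib

section
/- Suppose Ω ⊊ ℝⁿ is an (ε,δ)-domain. Then there is a constant C_ε depending only on ε and n such that for all x, y ∈ Ω with |x−y| < δ there exists a curve γ′ ⊆ Ω joining x to y with ∫_{γ′} ds/d_Ω(z) ≤ C_ε·(j_Ω(x,y) + 1). In particular k_Ω(x,y) ≤ C_ε·(j_Ω(x,y) + 1) whenever |x−y| < δ. -/
open Set Metric MeasureTheory
open scoped ENNReal

noncomputable section

abbrev Eu (n : ℕ) := EuclideanSpace ℝ (Fin n)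

variable {n : ℕ}

/-- Distance to the boundary of `Ω`. -/
def dOm (Ω : Set (Eu n)) (x : Eu n) : ℝ := Metric.infDist x (frontier Ω)

/-- A (Lipschitz) curve in `Ω` from `x` to `y`, parametrized on `[0,1]`. -/
structure IsCurve (Ω : Set (Eu n)) (γ : ℝ → Eu n) (x y : Eu n) : Prop where
  lipschitz : ∃ K, LipschitzOnWith K γ (Set.Icc 0 1)
  source : γ 0 = x
  target : γ 1 = y
  mem : ∀ t ∈ Set.Icc (0:ℝ) 1, γ t ∈ Ω

/-- Arclength of the portion of the curve between parameters `t₁` and `t₂`. -/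
def arclengthOn (γ : ℝ → Eu n) (t₁ t₂ : ℝ) : ℝ := ∫ t in t₁..t₂, ‖deriv γ t‖

/-- Arclength of a curve parametrized on `[0,1]`. -/
def arclength (γ : ℝ → Eu n) : ℝ := arclengthOn γ 0 1

/-- Line integral `∫_γ g ds` of a function `g` along a curve `γ`. -/
def lineIntegral (g : Eu n → ℝ) (γ : ℝ → Eu n) : ℝ := ∫ t in (0:ℝ)..1, g (γ t) * ‖deriv γ t‖

/-- The quasi-hyperbolic distance `k_Ω`. -/
def kDist (Ω : Set (Eu n)) (x y : Eu n) : ℝ :=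
  sInf { r | ∃ γ : ℝ → Eu n, IsCurve Ω γ x y ∧ r = lineIntegral (fun z => (dOm Ω z)⁻¹) γ }

/-- Quasi-hyperbolic distance from a point to a set. -/
def kDistSet (Ω : Set (Eu n)) (x : Eu n) (S : Set (Eu n)) : ℝ := sInf (kDist Ω x '' S)

/-- The distance `j_Ω`. -/
def jDist (Ω : Set (Eu n)) (x y : Eu n) : ℝ :=
  (1/2) * Real.log ((1 + dist x y / dOm Ω x) * (1 + dist x y / dOm Ω y))

/-- A quasi-hyperbolic geodesic from `x` to `y` in `Ω`. -/
def IsQHGeodesic (Ω : Set (Eu n)) (γ : ℝ → Eu n) (x y : Eu n) : Prop :=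
  IsCurve Ω γ x y ∧ lineIntegral (fun z => (dOm Ω z)⁻¹) γ = kDist Ω x y

/-- `Ω` is a domain: a nonempty proper open connected subset of `ℝⁿ`. -/
def IsDom (Ω : Set (Eu n)) : Prop := IsOpen Ω ∧ IsConnected Ω ∧ Ω ≠ Set.univ

/-- `(ε,δ)`-domain in the sense of Jones. -/
def IsEpsDeltaDomain (Ω : Set (Eu n)) (ε δ : ℝ) : Prop :=
  ∀ x ∈ Ω, ∀ y ∈ Ω, dist x y < δ → ∃ γ : ℝ → Eu n, IsCurve Ω γ x y ∧
    arclength γ ≤ ε⁻¹ * dist x y ∧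
    ∀ t ∈ Set.Icc (0:ℝ) 1, dOm Ω (γ t) ≥ ε * (dist (γ t) x * dist (γ t) y) / dist x y

/-- Closed axis-parallel cube with lower corner `a` and sidelength `l`. -/
def cube (a : Eu n) (l : ℝ) : Set (Eu n) := {x : Eu n | ∀ i, x i ∈ Set.Icc (a i) (a i + l)}

/-- `cube a l` is a dyadic cube. -/
def IsDyadic (a : Eu n) (l : ℝ) : Prop :=
  ∃ (k : ℤ) (m : Fin n → ℤ), l = 2 ^ (-k) ∧ ∀ i, a i = (m i : ℝ) * 2 ^ (-k)

/-- The dyadic cube of generation `k` indexed by `m`. -/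
def dyCube (k : ℤ) (m : Fin n → ℤ) : Set (Eu n) :=
  {x : Eu n | ∀ i, x i ∈ Set.Icc ((m i : ℝ) * 2 ^ (-k)) ((m i : ℝ) * 2 ^ (-k) + 2 ^ (-k))}

/-- Average of `f` over `Q`. -/
def avg (f : Eu n → ℝ) (Q : Set (Eu n)) : ℝ := ⨍ x in Q, f x

/-- Mean oscillation of `f` over `Q`. -/
def mo (f : Eu n → ℝ) (Q : Set (Eu n)) : ℝ := ⨍ x in Q, |f x - avg f Q|

/-- The BMO seminorm of `f` over `U` (supremum over cubes contained in `U`). -/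
def bmoSup (U : Set (Eu n)) (f : Eu n → ℝ) : ℝ≥0∞ :=
  ⨆ (a : Eu n) (l : ℝ) (_ : 0 < l) (_ : cube a l ⊆ U), ENNReal.ofReal (mo f (cube a l))

/-- The nonhomogeneous `bmo_lam` norm of `f` over `U`. -/
def bmoNorm (U : Set (Eu n)) (lam : ℝ) (f : Eu n → ℝ) : ℝ≥0∞ :=
  (⨆ (a : Eu n) (l : ℝ) (_ : 0 < l) (_ : l < lam) (_ : cube a l ⊆ U),
      ENNReal.ofReal (mo f (cube a l))) +
  ⨆ (a : Eu n) (l : ℝ) (_ : lam ≤ l) (_ : cube a l ⊆ U),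
      ENNReal.ofReal |avg f (cube a l)|

/-- `f ∈ bmo_lam(U)`: integrable on every cube contained in `U`, with finite norm. -/
def MemBmo (U : Set (Eu n)) (lam : ℝ) (f : Eu n → ℝ) : Prop :=
  (∀ (a : Eu n) (l : ℝ), 0 < l → cube a l ⊆ U → IntegrableOn f (cube a l)) ∧
    bmoNorm U lam f < ⊤

/-- Distance between two sets. -/
def setDist (s t : Set (Eu n)) : ℝ := sInf (Set.image2 dist s t)

/-- A Whitney decomposition of an open set `O`, given as a set of
(lower corner, sidelength) pairs of closed dyadic cubes. -/
structure IsWhitney (O : Set (Eu n)) (W : Set (Eu n × ℝ)) : Prop where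
  countable : W.Countable
  dyadic : ∀ q ∈ W, IsDyadic q.1 q.2
  disjointInteriors : ∀ q ∈ W, ∀ q' ∈ W, q ≠ q' →
    interior (cube q.1 q.2) ∩ interior (cube q'.1 q'.2) = ∅
  cover : ⋃ q ∈ W, cube q.1 q.2 = O
  distLower : ∀ q ∈ W, q.2 ≤ setDist (cube q.1 q.2) (frontier O)
  distUpper : ∀ q ∈ W, setDist (cube q.1 q.2) (frontier O) ≤ 4 * Real.sqrt n * q.2
  sizes : ∀ q ∈ W, ∀ q' ∈ W, (cube q.1 q.2 ∩ cube q'.1 q'.2).Nonempty →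
    q.2 / q'.2 ∈ Set.Icc (1/4 : ℝ) 4

/-- Extension hypothesis for `(Ω, lam, C)`: every `f ∈ bmo_lam(Ω)` admits an
extension `F` to `ℝⁿ` with `‖F‖_{BMO(ℝⁿ)} ≤ C ‖f‖_{bmo_lam(Ω)}`. -/
def ExtHyp (Ω : Set (Eu n)) (lam C : ℝ) : Prop :=
  ∀ f : Eu n → ℝ, MemBmo Ω lam f → ∃ F : Eu n → ℝ,
    (∀ (a : Eu n) (l : ℝ), 0 < l → IntegrableOn F (cube a l)) ∧
    (∀ x ∈ Ω, F x = f x) ∧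
    bmoSup Set.univ F ≤ ENNReal.ofReal C * bmoNorm Ω lam f

/-- The set `S_lam = {x ∈ Ω : d_Ω(x) ≥ lam/4}`. -/
def Slam (Ω : Set (Eu n)) (lam : ℝ) : Set (Eu n) := {x ∈ Ω | lam / 4 ≤ dOm Ω x}

/-- `η_lam(x,y) = k_Ω(x, S_lam) + k_Ω(y, S_lam)`. -/
def etaLam (Ω : Set (Eu n)) (lam : ℝ) (x y : Eu n) : ℝ :=
  kDistSet Ω x (Slam Ω lam) + kDistSet Ω y (Slam Ω lam)
section Aux

variable {Ω : Set (Eu n)}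

lemma frontier_nonempty' (hΩ : IsDom Ω) : (frontier Ω).Nonempty := by
  rcases hΩ with ⟨hopen, hconn, hne⟩
  rw [Set.nonempty_iff_ne_empty]
  intro h
  have hclopen : IsClopen Ω := isClopen_iff_frontier_eq_empty.mpr h
  have hpc : PreconnectedSpace (Eu n) :=
    ⟨(convex_univ : Convex ℝ (Set.univ : Set (Eu n))).isPreconnected⟩
  exact hne (hclopen.eq_univ hconn.nonempty)

lemma dOm_pos (hΩ : IsDom Ω) {x : Eu n} (hx : x ∈ Ω) : 0 < dOm Ω x := by
  have hfr : (frontier Ω).Nonempty := frontier_nonempty' hΩ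
  refine (isClosed_frontier.notMem_iff_infDist_pos hfr).mp ?_
  intro hmem
  rw [hΩ.1.frontier_eq] at hmem
  exact hmem.2 hx

lemma dOm_nonneg (Ω : Set (Eu n)) (x : Eu n) : 0 ≤ dOm Ω x := Metric.infDist_nonneg

lemma dOm_ge (Ω : Set (Eu n)) (p z : Eu n) : dOm Ω p - dist z p ≤ dOm Ω z := by
  have := Metric.infDist_le_infDist_add_dist (x := p) (y := z) (s := frontier Ω)
  rw [dist_comm] at this
  unfold dOm
  linarith

lemma norm_deriv_le_of_lip {γ : ℝ → Eu n} {K : NNReal} (hK : LipschitzOnWith K γ (Set.Icc 0 1))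
    {t : ℝ} (ht : t ∈ Set.Ioo (0:ℝ) 1) : ‖deriv γ t‖ ≤ K := by
  by_cases hd : DifferentiableAt ℝ γ t
  · have h2 : ‖fderiv ℝ γ t‖ ≤ K :=
      hd.hasFDerivAt.le_of_lipschitzOn (Icc_mem_nhds ht.1 ht.2) hK
    calc ‖deriv γ t‖ = ‖fderiv ℝ γ t 1‖ := rfl
      _ ≤ ‖fderiv ℝ γ t‖ * ‖(1:ℝ)‖ := (fderiv ℝ γ t).le_opNorm 1
      _ ≤ K := by simpa using h2
  · rw [deriv_zero_of_not_differentiableAt hd]; simp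

lemma lineIntegral_nonneg {g : Eu n → ℝ} (hg : ∀ z, 0 ≤ g z) (γ : ℝ → Eu n) :
    0 ≤ lineIntegral g γ :=
  intervalIntegral.integral_nonneg zero_le_one (fun u _ => mul_nonneg (hg _) (norm_nonneg _))

lemma arclength_nonneg (γ : ℝ → Eu n) : 0 ≤ arclength γ :=
  intervalIntegral.integral_nonneg zero_le_one (fun u _ => norm_nonneg _)

lemma isCurve_const {p : Eu n} (hp : p ∈ Ω) : IsCurve Ω (fun _ => p) p p :=
  ⟨⟨0, fun _ _ _ _ => by simp⟩, rfl, rfl, fun _ _ => hp⟩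

lemma lineIntegral_const (g : Eu n → ℝ) (p : Eu n) : lineIntegral g (fun _ : ℝ => p) = 0 := by
  unfold lineIntegral
  simp

end Aux
section Aux2

variable {Ω : Set (Eu n)}

lemma curve_integrable (hΩ : IsDom Ω) {γ : ℝ → Eu n} {x y : Eu n} (h : IsCurve Ω γ x y) :
    IntervalIntegrable (fun t => (dOm Ω (γ t))⁻¹ * ‖deriv γ t‖) MeasureTheory.volume 0 1 ∧
    IntervalIntegrable (fun t => ‖deriv γ t‖) MeasureTheory.volume 0 1 := by
  obtain ⟨K, hK⟩ := h.lipschitz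
  have hcont : ContinuousOn γ (Set.Icc 0 1) := hK.continuousOn
  have hdOm_cont : ContinuousOn (fun t => dOm Ω (γ t)) (Set.Icc 0 1) :=
    (Metric.continuous_infDist_pt (frontier Ω)).comp_continuousOn hcont
  obtain ⟨t₀, ht₀, hmin⟩ := isCompact_Icc.exists_isMinOn
    ⟨0, Set.left_mem_Icc.2 zero_le_one⟩ hdOm_cont
  set m₀ := dOm Ω (γ t₀) with hm₀def
  have hm₀ : 0 < m₀ := dOm_pos hΩ (h.mem t₀ ht₀)
  have hge : ∀ t ∈ Set.Icc (0:ℝ) 1, m₀ ≤ dOm Ω (γ t) := fun t ht => hmin ht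
  have hvol : MeasureTheory.volume (Set.Icc (0:ℝ) 1) ≠ ⊤ := by
    simp [Real.volume_Icc]
  have hmeas2 : AEStronglyMeasurable (fun t => ‖deriv γ t‖)
      (MeasureTheory.volume.restrict (Set.Icc (0:ℝ) 1)) :=
    ((measurable_deriv γ).norm).aestronglyMeasurable
  have hmeas1 : AEStronglyMeasurable (fun t => (dOm Ω (γ t))⁻¹)
      (MeasureTheory.volume.restrict (Set.Icc (0:ℝ) 1)) := by
    refine ContinuousOn.aestronglyMeasurable ?_ measurableSet_Icc
    exact hdOm_cont.inv₀ (fun t ht => (lt_of_lt_of_le hm₀ (hge t ht)).ne')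
  have haeIoo : MeasureTheory.volume.restrict (Set.Icc (0:ℝ) 1)
      = MeasureTheory.volume.restrict (Set.Ioo (0:ℝ) 1) :=
    (MeasureTheory.Measure.restrict_congr_set MeasureTheory.Ioo_ae_eq_Icc).symm
  have hb2 : ∀ᵐ t ∂(MeasureTheory.volume.restrict (Set.Icc (0:ℝ) 1)),
      ‖‖deriv γ t‖‖ ≤ (K:ℝ) := by
    rw [haeIoo]
    filter_upwards [MeasureTheory.ae_restrict_mem measurableSet_Ioo] with t ht
    simpa using norm_deriv_le_of_lip hK ht
  have hb1 : ∀ᵐ t ∂(MeasureTheory.volume.restrict (Set.Icc (0:ℝ) 1)),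
      ‖(dOm Ω (γ t))⁻¹ * ‖deriv γ t‖‖ ≤ m₀⁻¹ * (K:ℝ) := by
    rw [haeIoo]
    filter_upwards [MeasureTheory.ae_restrict_mem measurableSet_Ioo] with t ht
    have h1 : (dOm Ω (γ t))⁻¹ ≤ m₀⁻¹ := by
      apply inv_anti₀ hm₀ (hge t (Set.Ioo_subset_Icc_self ht))
    have h2 : ‖deriv γ t‖ ≤ (K:ℝ) := norm_deriv_le_of_lip hK ht
    have h3 : (0:ℝ) ≤ (dOm Ω (γ t))⁻¹ := inv_nonneg.2 (dOm_nonneg _ _)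
    rw [norm_mul, norm_norm, Real.norm_eq_abs, abs_of_nonneg h3]
    exact mul_le_mul h1 h2 (norm_nonneg _) (inv_nonneg.2 hm₀.le)
  have hvol' : MeasureTheory.volume (Set.Icc (0:ℝ) 1) < ⊤ := hvol.lt_top
  have hI2 : MeasureTheory.IntegrableOn (fun t => ‖deriv γ t‖) (Set.Icc (0:ℝ) 1) :=
    ⟨hmeas2, MeasureTheory.HasFiniteIntegral.restrict_of_bounded _ hvol' hb2⟩
  have hI1 : MeasureTheory.IntegrableOn (fun t => (dOm Ω (γ t))⁻¹ * ‖deriv γ t‖)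
      (Set.Icc (0:ℝ) 1) :=
    ⟨hmeas1.mul hmeas2, MeasureTheory.HasFiniteIntegral.restrict_of_bounded _ hvol' hb1⟩
  rw [show Set.Icc (0:ℝ) 1 = Set.uIcc (0:ℝ) 1 from (Set.uIcc_of_le zero_le_one).symm]
    at hI1 hI2
  exact ⟨hI1.intervalIntegrable, hI2.intervalIntegrable⟩

lemma deriv_comp_affine (γ : ℝ → Eu n) {c : ℝ} (hc : c ≠ 0) (b t : ℝ) :
    deriv (fun s => γ (c * s + b)) t = c • deriv γ (c * t + b) := by
  by_cases hd : DifferentiableAt ℝ γ (c * t + b)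
  · have hin : HasDerivAt (fun s : ℝ => c * s + b) c t := by
      simpa using ((hasDerivAt_id t).const_mul c).add_const b
    exact (HasDerivAt.scomp t hd.hasDerivAt hin).deriv
  · have hnd : ¬ DifferentiableAt ℝ (fun s => γ (c * s + b)) t := by
      intro hcomp
      apply hd
      have h2 : DifferentiableAt ℝ (fun u : ℝ => c⁻¹ * (u - b)) (c * t + b) :=
        (differentiableAt_id.sub_const b).const_mul c⁻¹
      have heq : (fun u : ℝ => c⁻¹ * (u - b)) (c * t + b) = t := by
        field_simp
        ring
      have h3 : DifferentiableAt ℝ ((fun s => γ (c * s + b)) ∘ (fun u : ℝ => c⁻¹ * (u - b)))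
          (c * t + b) := by
        apply DifferentiableAt.comp
        · have heq' : c⁻¹ * (c * t + b - b) = t := by field_simp; ring
          rw [heq']; exact hcomp
        · exact h2
      have h4 : ((fun s => γ (c * s + b)) ∘ (fun u : ℝ => c⁻¹ * (u - b))) = γ := by
        funext u
        simp only [Function.comp]
        congr 1
        field_simp
        ring
      rwa [h4] at h3
    rw [deriv_zero_of_not_differentiableAt hd, deriv_zero_of_not_differentiableAt hnd,
      smul_zero]

end Aux2
section Aux3

variable {Ω : Set (Eu n)}

/-- Concatenation of two curves. -/
def catC (γ₁ γ₂ : ℝ → Eu n) : ℝ → Eu n := fun t => if t < 2⁻¹ then γ₁ (2*t) else γ₂ (2*t - 1)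

lemma isCurve_cat {γ₁ γ₂ : ℝ → Eu n} {x z y : Eu n}
    (h₁ : IsCurve Ω γ₁ x z) (h₂ : IsCurve Ω γ₂ z y) : IsCurve Ω (catC γ₁ γ₂) x y := by
  obtain ⟨K₁, hK₁⟩ := h₁.lipschitz
  obtain ⟨K₂, hK₂⟩ := h₂.lipschitz
  have hd₁ := lipschitzOnWith_iff_dist_le_mul.mp hK₁
  have hd₂ := lipschitzOnWith_iff_dist_le_mul.mp hK₂
  refine ⟨⟨2 * (K₁ ⊔ K₂), ?_⟩, ?_, ?_, ?_⟩
  · rw [lipschitzOnWith_iff_dist_le_mul]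
    have key : ∀ s ∈ Set.Icc (0:ℝ) 1, ∀ t ∈ Set.Icc (0:ℝ) 1, s ≤ t →
        dist (catC γ₁ γ₂ s) (catC γ₁ γ₂ t) ≤ (2 * (K₁ ⊔ K₂) : NNReal) * dist s t := by
      intro s hs t ht hst
      have hcoe : ((2 * (K₁ ⊔ K₂) : NNReal) : ℝ) = 2 * max (K₁ : ℝ) (K₂ : ℝ) := by
        push_cast; rfl
      have hK₁max : (K₁ : ℝ) ≤ max (K₁ : ℝ) (K₂ : ℝ) := le_max_left _ _
      have hK₂max : (K₂ : ℝ) ≤ max (K₁ : ℝ) (K₂ : ℝ) := le_max_right _ _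
      have hdist : dist s t = t - s := by rw [Real.dist_eq, abs_of_nonpos (by linarith)]; ring
      by_cases h1 : t < 2⁻¹
      · have h1s : s < 2⁻¹ := lt_of_le_of_lt hst h1
        have hms : (2*s) ∈ Set.Icc (0:ℝ) 1 := ⟨by linarith [hs.1], by linarith⟩
        have hmt : (2*t) ∈ Set.Icc (0:ℝ) 1 := ⟨by linarith [ht.1], by linarith⟩
        have := hd₁ _ hms _ hmt
        have hd2 : dist (2*s) (2*t) = 2*(t-s) := by
          rw [Real.dist_eq, abs_of_nonpos (by linarith)]; ring
        simp only [catC, if_pos h1, if_pos h1s]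
        rw [hcoe, hdist]
        nlinarith [K₁.coe_nonneg, K₂.coe_nonneg]
      · by_cases h2 : s < 2⁻¹
        · -- s < 1/2 ≤ t
          have hts : (2:ℝ)⁻¹ ≤ t := not_lt.mp h1
          have hms : (2*s) ∈ Set.Icc (0:ℝ) 1 := ⟨by linarith [hs.1], by linarith⟩
          have hmt : (2*t - 1) ∈ Set.Icc (0:ℝ) 1 := ⟨by linarith, by linarith [ht.2]⟩
          have hone : (1:ℝ) ∈ Set.Icc (0:ℝ) 1 := ⟨zero_le_one, le_refl 1⟩
          have hzero : (0:ℝ) ∈ Set.Icc (0:ℝ) 1 := ⟨le_refl 0, zero_le_one⟩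
          have e1 := hd₁ _ hms _ hone
          have e2 := hd₂ _ hzero _ hmt
          have hde1 : dist (2*s) (1:ℝ) = 1 - 2*s := by
            rw [Real.dist_eq, abs_of_nonpos (by linarith)]; ring
          have hde2 : dist (0:ℝ) (2*t-1) = 2*t - 1 := by
            rw [Real.dist_eq, abs_of_nonpos (by linarith)]; ring
          rw [hde1] at e1; rw [hde2] at e2
          have tri : dist (catC γ₁ γ₂ s) (catC γ₁ γ₂ t)
              ≤ dist (γ₁ (2*s)) (γ₁ 1) + dist (γ₂ 0) (γ₂ (2*t-1)) := by
            simp only [catC, if_pos h2, if_neg h1]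
            calc dist (γ₁ (2*s)) (γ₂ (2*t-1))
                ≤ dist (γ₁ (2*s)) (γ₁ 1) + dist (γ₁ 1) (γ₂ (2*t-1)) := dist_triangle _ _ _
              _ = dist (γ₁ (2*s)) (γ₁ 1) + dist (γ₂ 0) (γ₂ (2*t-1)) := by
                  rw [h₁.target, h₂.source]
          rw [hcoe, hdist]
          have c1 : (0:ℝ) ≤ (K₁ : ℝ) := K₁.coe_nonneg
          have c2 : (0:ℝ) ≤ (K₂ : ℝ) := K₂.coe_nonneg
          nlinarith
        · -- both ≥ 1/2
          have hss : (2:ℝ)⁻¹ ≤ s := not_lt.mp h2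
          have hms : (2*s - 1) ∈ Set.Icc (0:ℝ) 1 := ⟨by linarith, by linarith [hs.2]⟩
          have hmt : (2*t - 1) ∈ Set.Icc (0:ℝ) 1 := ⟨by linarith, by linarith [ht.2]⟩
          have := hd₂ _ hms _ hmt
          have hd2 : dist (2*s-1) (2*t-1) = 2*(t-s) := by
            rw [Real.dist_eq, abs_of_nonpos (by linarith)]; ring
          simp only [catC, if_neg h2, if_neg h1]
          rw [hcoe, hdist]
          have c2 : (0:ℝ) ≤ (K₂ : ℝ) := K₂.coe_nonneg
          nlinarith [K₁.coe_nonneg, le_max_right (K₁:ℝ) (K₂:ℝ)]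
    intro s hs t ht
    rcases le_total s t with h | h
    · exact key s hs t ht h
    · rw [dist_comm, dist_comm s t]; exact key t ht s hs h
  · simp [catC, h₁.source, show (0:ℝ) < 2⁻¹ by norm_num]
  · have : ¬ ((1:ℝ) < 2⁻¹) := by norm_num
    rw [show catC γ₁ γ₂ 1 = γ₂ (2*1-1) from if_neg this]
    norm_num [h₂.target]
  · intro t ht
    by_cases h1 : t < 2⁻¹
    · simp only [catC, if_pos h1]
      exact h₁.mem _ ⟨by linarith [ht.1], by linarith⟩
    · simp only [catC, if_neg h1]
      push_neg at h1
      exact h₂.mem _ ⟨by linarith, by linarith [ht.2]⟩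

end Aux3
section Aux4

variable {Ω : Set (Eu n)}

lemma lineIntegral_cat (hΩ : IsDom Ω) {γ₁ γ₂ : ℝ → Eu n} {x z y : Eu n}
    (h₁ : IsCurve Ω γ₁ x z) (h₂ : IsCurve Ω γ₂ z y) :
    lineIntegral (fun w => (dOm Ω w)⁻¹) (catC γ₁ γ₂)
      = lineIntegral (fun w => (dOm Ω w)⁻¹) γ₁ + lineIntegral (fun w => (dOm Ω w)⁻¹) γ₂ := by
  set g : Eu n → ℝ := fun w => (dOm Ω w)⁻¹ with hg
  set F : ℝ → ℝ := fun t => g (catC γ₁ γ₂ t) * ‖deriv (catC γ₁ γ₂) t‖ with hF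
  have hcat := isCurve_cat h₁ h₂
  have hFint : IntervalIntegrable F MeasureTheory.volume 0 1 := (curve_integrable hΩ hcat).1
  have hmem : ∀ c : ℝ, c ∈ Set.Icc (0:ℝ) 1 → c ∈ Set.uIcc (0:ℝ) 1 := by
    intro c hc; rwa [Set.uIcc_of_le zero_le_one]
  have hFint1 : IntervalIntegrable F MeasureTheory.volume 0 2⁻¹ :=
    hFint.mono_set (Set.uIcc_subset_uIcc (hmem 0 (by norm_num)) (hmem 2⁻¹ (by norm_num)))
  have hFint2 : IntervalIntegrable F MeasureTheory.volume 2⁻¹ 1 :=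
    hFint.mono_set (Set.uIcc_subset_uIcc (hmem 2⁻¹ (by norm_num)) (hmem 1 (by norm_num)))
  have hsplit : lineIntegral g (catC γ₁ γ₂)
      = (∫ t in (0:ℝ)..2⁻¹, F t) + ∫ t in (2⁻¹:ℝ)..1, F t :=
    (intervalIntegral.integral_add_adjacent_intervals hFint1 hFint2).symm
  have hne : ∀ᵐ t : ℝ ∂MeasureTheory.volume, t ≠ 2⁻¹ := by
    rw [MeasureTheory.ae_iff]
    have : {t : ℝ | ¬ t ≠ 2⁻¹} = {(2:ℝ)⁻¹} := by ext t; simp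
    rw [this]
    exact MeasureTheory.measure_singleton _
  have e1 : (∫ t in (0:ℝ)..2⁻¹, F t) = lineIntegral g γ₁ := by
    have hae : ∀ᵐ t ∂MeasureTheory.volume, t ∈ Set.uIoc (0:ℝ) 2⁻¹ →
        F t = 2 * (g (γ₁ (2*t + 0)) * ‖deriv γ₁ (2*t + 0)‖) := by
      filter_upwards [hne] with t htne ht
      rw [Set.uIoc_of_le (by norm_num : (0:ℝ) ≤ 2⁻¹)] at ht
      have ht2 : t < 2⁻¹ := lt_of_le_of_ne ht.2 htne
      have hev : catC γ₁ γ₂ =ᶠ[nhds t] (fun s => γ₁ (2*s + 0)) := by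
        filter_upwards [Iio_mem_nhds ht2] with s hs
        simp only [catC, if_pos (Set.mem_Iio.mp hs), add_zero]
      have hderiv : deriv (catC γ₁ γ₂) t = deriv (fun s => γ₁ (2*s + 0)) t := hev.deriv_eq
      have hval : catC γ₁ γ₂ t = γ₁ (2*t + 0) := by
        simp only [catC, if_pos ht2, add_zero]
      rw [hF]
      simp only [hval, hderiv, deriv_comp_affine γ₁ (two_ne_zero) 0 t]
      rw [norm_smul]
      simp only [Real.norm_eq_abs, abs_two]
      ring
    rw [intervalIntegral.integral_congr_ae hae]
    rw [intervalIntegral.integral_const_mul]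
    rw [intervalIntegral.integral_comp_mul_add
      (fun s => g (γ₁ s) * ‖deriv γ₁ s‖) (two_ne_zero) 0]
    norm_num [lineIntegral, smul_eq_mul]
    ring
  have e2 : (∫ t in (2⁻¹:ℝ)..1, F t) = lineIntegral g γ₂ := by
    have hae : ∀ᵐ t ∂MeasureTheory.volume, t ∈ Set.uIoc (2⁻¹:ℝ) 1 →
        F t = 2 * (g (γ₂ (2*t + (-1))) * ‖deriv γ₂ (2*t + (-1))‖) := by
      filter_upwards with t ht
      rw [Set.uIoc_of_le (by norm_num : (2⁻¹:ℝ) ≤ 1)] at ht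
      have ht2 : ¬ (t < 2⁻¹) := not_lt.mpr ht.1.le
      have hev : catC γ₁ γ₂ =ᶠ[nhds t] (fun s => γ₂ (2*s + (-1))) := by
        filter_upwards [Ioi_mem_nhds ht.1] with s hs
        have : ¬ (s < 2⁻¹) := not_lt.mpr (Set.mem_Ioi.mp hs).le
        simp only [catC, if_neg this]
        congr 1
      have hderiv : deriv (catC γ₁ γ₂) t = deriv (fun s => γ₂ (2*s + (-1))) t := hev.deriv_eq
      have hval : catC γ₁ γ₂ t = γ₂ (2*t + (-1)) := by
        simp only [catC, if_neg ht2]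
        congr 1
      rw [hF]
      simp only [hval, hderiv, deriv_comp_affine γ₂ (two_ne_zero) (-1) t]
      rw [norm_smul]
      simp only [Real.norm_eq_abs, abs_two]
      ring
    rw [intervalIntegral.integral_congr_ae hae]
    rw [intervalIntegral.integral_const_mul]
    rw [intervalIntegral.integral_comp_mul_add
      (fun s => g (γ₂ s) * ‖deriv γ₂ s‖) (two_ne_zero) (-1)]
    norm_num [lineIntegral, smul_eq_mul]
    ring
  rw [hsplit, e1, e2]

/-- Combine two curves with line-integral bounds. -/
lemma curve_trans (hΩ : IsDom Ω) {x z y : Eu n} {a b : ℝ}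
    (h₁ : ∃ γ : ℝ → Eu n, IsCurve Ω γ x z ∧ lineIntegral (fun w => (dOm Ω w)⁻¹) γ ≤ a)
    (h₂ : ∃ γ : ℝ → Eu n, IsCurve Ω γ z y ∧ lineIntegral (fun w => (dOm Ω w)⁻¹) γ ≤ b) :
    ∃ γ : ℝ → Eu n, IsCurve Ω γ x y ∧ lineIntegral (fun w => (dOm Ω w)⁻¹) γ ≤ a + b := by
  obtain ⟨γ₁, hc₁, hb₁⟩ := h₁
  obtain ⟨γ₂, hc₂, hb₂⟩ := h₂
  exact ⟨catC γ₁ γ₂, isCurve_cat hc₁ hc₂, by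
    rw [lineIntegral_cat hΩ hc₁ hc₂]; exact add_le_add hb₁ hb₂⟩

end Aux4
section Aux5

variable {Ω : Set (Eu n)}

lemma subcurve (hΩ : IsDom Ω) {γ : ℝ → Eu n} {x y : Eu n} (h : IsCurve Ω γ x y)
    {ta tb : ℝ} (h0 : 0 ≤ ta) (hab : ta ≤ tb) (hb1 : tb ≤ 1) {m : ℝ} (hm : 0 < m)
    (hd : ∀ t ∈ Set.Icc ta tb, m ≤ dOm Ω (γ t)) :
    ∃ c : ℝ → Eu n, IsCurve Ω c (γ ta) (γ tb) ∧
      lineIntegral (fun w => (dOm Ω w)⁻¹) c ≤ m⁻¹ * arclength γ := by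
  have hIcc : Set.Icc ta tb ⊆ Set.Icc (0:ℝ) 1 := Set.Icc_subset_Icc h0 hb1
  rcases eq_or_lt_of_le hab with heq | hlt
  · subst heq
    refine ⟨fun _ => γ ta, isCurve_const (h.mem ta ⟨h0, hab.trans hb1⟩), ?_⟩
    rw [lineIntegral_const]
    exact mul_nonneg (inv_nonneg.2 hm.le) (arclength_nonneg γ)
  · set ℓ := tb - ta with hℓdef
    have hℓ : 0 < ℓ := by simp [hℓdef]; linarith
    have hℓne : ℓ ≠ 0 := hℓ.ne'
    obtain ⟨K, hK⟩ := h.lipschitz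
    set c : ℝ → Eu n := fun t => γ (ℓ * t + ta) with hc
    have harg : ∀ t ∈ Set.Icc (0:ℝ) 1, ℓ * t + ta ∈ Set.Icc ta tb := by
      intro t ht
      constructor
      · nlinarith [ht.1]
      · nlinarith [ht.2]
    have hcurve : IsCurve Ω c (γ ta) (γ tb) := by
      refine ⟨⟨K * Real.toNNReal ℓ, ?_⟩, ?_, ?_, ?_⟩
      · rw [lipschitzOnWith_iff_dist_le_mul]
        intro s hs t ht
        have h1 := (lipschitzOnWith_iff_dist_le_mul.mp hK) _ (hIcc (harg s hs)) _
          (hIcc (harg t ht))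
        have h2 : dist (ℓ * s + ta) (ℓ * t + ta) = ℓ * dist s t := by
          rw [Real.dist_eq, Real.dist_eq]
          rw [show ℓ * s + ta - (ℓ * t + ta) = ℓ * (s - t) by ring, abs_mul,
            abs_of_pos hℓ]
        have h3 : ((K * Real.toNNReal ℓ : NNReal) : ℝ) = (K:ℝ) * ℓ := by
          push_cast [Real.coe_toNNReal ℓ hℓ.le]
          ring
        rw [h3]
        calc dist (c s) (c t) ≤ (K:ℝ) * (ℓ * dist s t) := by rw [← h2]; exact h1
          _ = (K:ℝ) * ℓ * dist s t := by ring
      · show γ (ℓ * 0 + ta) = γ ta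
        congr 1; ring
      · show γ (ℓ * 1 + ta) = γ tb
        congr 1; rw [hℓdef]; ring
      · intro t ht
        exact h.mem _ (hIcc (harg t ht))
    refine ⟨c, hcurve, ?_⟩
    set H : ℝ → ℝ := fun s => (dOm Ω (γ s))⁻¹ * ‖deriv γ s‖ with hH
    have hint : IntervalIntegrable H MeasureTheory.volume 0 1 := (curve_integrable hΩ h).1
    have hint2 : IntervalIntegrable (fun s => ‖deriv γ s‖) MeasureTheory.volume 0 1 :=
      (curve_integrable hΩ h).2
    have hsub : Set.uIcc ta tb ⊆ Set.uIcc (0:ℝ) 1 := by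
      rw [Set.uIcc_of_le hab, Set.uIcc_of_le zero_le_one]
      exact hIcc
    have heqfun : (fun t => (dOm Ω (c t))⁻¹ * ‖deriv c t‖)
        = fun t => ℓ * H (ℓ * t + ta) := by
      funext t
      rw [hc]
      simp only []
      rw [deriv_comp_affine γ hℓne ta t, norm_smul, Real.norm_eq_abs, abs_of_pos hℓ, hH]
      ring
    have step1 : lineIntegral (fun w => (dOm Ω w)⁻¹) c = ∫ s in ta..tb, H s := by
      rw [lineIntegral]
      rw [show (fun t => (fun w => (dOm Ω w)⁻¹) (c t) * ‖deriv c t‖)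
        = fun t => ℓ * H (ℓ * t + ta) from heqfun]
      rw [intervalIntegral.integral_const_mul]
      rw [intervalIntegral.integral_comp_mul_add H hℓne ta]
      rw [smul_eq_mul, show ℓ * 0 + ta = ta by ring, show ℓ * 1 + ta = tb by rw [hℓdef]; ring]
      field_simp
    have step2 : (∫ s in ta..tb, H s) ≤ ∫ s in ta..tb, m⁻¹ * ‖deriv γ s‖ := by
      apply intervalIntegral.integral_mono_on hab
        (hint.mono_set hsub) ((hint2.mono_set hsub).const_mul m⁻¹)
      intro s hs
      rw [hH]
      have h1 : (dOm Ω (γ s))⁻¹ ≤ m⁻¹ := inv_anti₀ hm (hd s hs)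
      exact mul_le_mul_of_nonneg_right h1 (norm_nonneg _)
    have step3 : (∫ s in ta..tb, m⁻¹ * ‖deriv γ s‖) ≤ m⁻¹ * arclength γ := by
      rw [intervalIntegral.integral_const_mul]
      apply mul_le_mul_of_nonneg_left ?_ (inv_nonneg.2 hm.le)
      apply intervalIntegral.integral_mono_interval h0 hab hb1 ?_ hint2
      filter_upwards with s
      simpa using norm_nonneg (deriv γ s)
    rw [step1]
    exact step2.trans step3

lemma hop (hΩ : IsDom Ω) {ε δ : ℝ} (hε : 0 < ε) (hJ : IsEpsDeltaDomain Ω ε δ) {p q : Eu n}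
    (hp : p ∈ Ω) (hq : q ∈ Ω) (hδ : dist p q < δ) {a b : ℝ} (ha : 0 < a) (hb : 0 < b)
    (hda : a ≤ dOm Ω p) (hdb : b ≤ dOm Ω q) :
    ∃ γ : ℝ → Eu n, IsCurve Ω γ p q ∧ lineIntegral (fun w => (dOm Ω w)⁻¹) γ
      ≤ ε⁻¹ * (2*dist p q/a + 2*dist p q/b + 4*(dist p q)^2/(ε*a*b)) := by
  by_cases hpq : p = q
  · subst hpq
    refine ⟨fun _ => p, isCurve_const hp, ?_⟩
    rw [lineIntegral_const]
    simp
  · have hℓ : 0 < dist p q := dist_pos.mpr hpq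
    set ℓ := dist p q with hℓdef
    obtain ⟨σ, hσ, hlen, hlow⟩ := hJ p hp q hq hδ
    set M : ℝ := 2/a + 2/b + 4*ℓ/(ε*a*b) with hM
    have hMnn : 0 ≤ M := by
      rw [hM]; positivity
    have hpt : ∀ t ∈ Set.Icc (0:ℝ) 1, (dOm Ω (σ t))⁻¹ ≤ M := by
      intro t ht
      by_cases hc1 : dist (σ t) p ≤ a/2
      · have hge : a/2 ≤ dOm Ω (σ t) := by
          have := dOm_ge Ω p (σ t)
          linarith
        have : (dOm Ω (σ t))⁻¹ ≤ (a/2)⁻¹ := inv_anti₀ (by linarith) hge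
        rw [hM]
        have h4 : 0 ≤ 4*ℓ/(ε*a*b) := by positivity
        have h2b : 0 ≤ 2/b := by positivity
        have : (a/2)⁻¹ = 2/a := by field_simp
        linarith
      · by_cases hc2 : dist (σ t) q ≤ b/2
        · have hge : b/2 ≤ dOm Ω (σ t) := by
            have := dOm_ge Ω q (σ t)
            linarith
          have : (dOm Ω (σ t))⁻¹ ≤ (b/2)⁻¹ := inv_anti₀ (by linarith) hge
          rw [hM]
          have h4 : 0 ≤ 4*ℓ/(ε*a*b) := by positivity
          have h2a : 0 ≤ 2/a := by positivity
          have : (b/2)⁻¹ = 2/b := by field_simp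
          linarith
        · push_neg at hc1 hc2
          have hge : ε * ((a/2) * (b/2)) / ℓ ≤ dOm Ω (σ t) := by
            have h1 := hlow t ht
            have h2 : ε * ((a/2) * (b/2)) / ℓ ≤ ε * (dist (σ t) p * dist (σ t) q) / ℓ := by
              gcongr <;> first | positivity | linarith
            exact h2.trans h1
          have hpos : 0 < ε * ((a/2) * (b/2)) / ℓ := by positivity
          have hinv : (dOm Ω (σ t))⁻¹ ≤ (ε * ((a/2) * (b/2)) / ℓ)⁻¹ := inv_anti₀ hpos hge
          have heq : (ε * ((a/2) * (b/2)) / ℓ)⁻¹ = 4*ℓ/(ε*a*b) := by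
            field_simp
            ring
          rw [hM]
          have h2a : 0 ≤ 2/a := by positivity
          have h2b : 0 ≤ 2/b := by positivity
          rw [heq] at hinv
          linarith
    refine ⟨σ, hσ, ?_⟩
    have hint := curve_integrable hΩ hσ
    have step1 : lineIntegral (fun w => (dOm Ω w)⁻¹) σ
        ≤ ∫ t in (0:ℝ)..1, M * ‖deriv σ t‖ := by
      rw [lineIntegral]
      apply intervalIntegral.integral_mono_on zero_le_one hint.1 (hint.2.const_mul M)
      intro t ht
      exact mul_le_mul_of_nonneg_right (hpt t ht) (norm_nonneg _)
    have step2 : (∫ t in (0:ℝ)..1, M * ‖deriv σ t‖) ≤ M * (ε⁻¹ * ℓ) := by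
      rw [intervalIntegral.integral_const_mul]
      exact mul_le_mul_of_nonneg_left hlen hMnn
    have step3 : M * (ε⁻¹ * ℓ) = ε⁻¹ * (2*ℓ/a + 2*ℓ/b + 4*ℓ^2/(ε*a*b)) := by
      rw [hM]; ring
    linarith [step1, step2, step3.le, step3.ge]

end Aux5
section Aux6

variable {Ω : Set (Eu n)}

lemma chain_down (hΩ : IsDom Ω) {x : Eu n} (p : ℕ → Eu n) {A₁ : ℝ}
    (hhop : ∀ j : ℕ, ∃ c : ℝ → Eu n, IsCurve Ω c (p (j+1)) (p j) ∧
      lineIntegral (fun w => (dOm Ω w)⁻¹) c ≤ A₁) :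
    ∀ J : ℕ, ∀ A₀ : ℝ, (∃ c : ℝ → Eu n, IsCurve Ω c x (p J) ∧
      lineIntegral (fun w => (dOm Ω w)⁻¹) c ≤ A₀) →
      ∃ c : ℝ → Eu n, IsCurve Ω c x (p 0) ∧
        lineIntegral (fun w => (dOm Ω w)⁻¹) c ≤ A₀ + J * A₁ := by
  intro J
  induction J with
  | zero =>
    intro A₀ h
    simpa using h
  | succ J ih =>
    intro A₀ h
    have h' := curve_trans hΩ h (hhop J)
    obtain ⟨c, hc, hbc⟩ := ih (A₀ + A₁) h'
    refine ⟨c, hc, ?_⟩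
    push_cast
    push_cast at hbc
    linarith

lemma chain_up (hΩ : IsDom Ω) (q : ℕ → Eu n) (hq0 : q 0 ∈ Ω) {A₁ : ℝ} (hA₁ : 0 ≤ A₁)
    (hhop : ∀ j : ℕ, ∃ c : ℝ → Eu n, IsCurve Ω c (q j) (q (j+1)) ∧
      lineIntegral (fun w => (dOm Ω w)⁻¹) c ≤ A₁) :
    ∀ J : ℕ, ∃ c : ℝ → Eu n, IsCurve Ω c (q 0) (q J) ∧
      lineIntegral (fun w => (dOm Ω w)⁻¹) c ≤ J * A₁ := by
  intro J
  induction J with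
  | zero =>
    refine ⟨fun _ => q 0, isCurve_const hq0, ?_⟩
    rw [lineIntegral_const]
    simp
  | succ J ih =>
    have h' := curve_trans hΩ ih (hhop J)
    obtain ⟨c, hc, hbc⟩ := h'
    refine ⟨c, hc, ?_⟩
    push_cast
    push_cast at hbc
    linarith

end Aux6
section Aux7

variable {Ω : Set (Eu n)}

lemma junction_times {γ : ℝ → Eu n} {x y : Eu n} (hγ : IsCurve Ω γ x y)
    (hD : 0 < dist x y) :
    ∃ ta tb : ℝ, 0 ≤ ta ∧ ta ≤ tb ∧ tb ≤ 1 ∧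
      dist (γ ta) x = dist x y/4 ∧ dist (γ tb) y = dist x y/4 ∧
      (∀ t ∈ Set.Icc ta tb, dist x y/4 ≤ dist (γ t) x ∧ dist x y/4 ≤ dist (γ t) y) := by
  obtain ⟨K, hK⟩ := hγ.lipschitz
  have hcont : ContinuousOn γ (Set.Icc 0 1) := hK.continuousOn
  set D := dist x y with hDdef
  set u : ℝ → ℝ := fun t => dist (γ t) x with hu
  set v : ℝ → ℝ := fun t => dist (γ t) y with hv
  have hucont : ContinuousOn u (Set.Icc 0 1) :=
    (continuous_id.dist continuous_const).comp_continuousOn hcont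
  have hvcont : ContinuousOn v (Set.Icc 0 1) :=
    (continuous_id.dist continuous_const).comp_continuousOn hcont
  have hu0 : u 0 = 0 := by rw [hu]; simp [hγ.source]
  have hv1 : v 1 = 0 := by rw [hv]; simp [hγ.target]
  have hv0 : v 0 = D := by rw [hv]; simp [hγ.source, hDdef]
  have htri : ∀ t, D ≤ u t + v t := by
    intro t
    have h := dist_triangle x (γ t) y
    rw [dist_comm x (γ t)] at h
    exact h
  -- define tb
  set T : Set ℝ := Set.Icc (0:ℝ) 1 ∩ v ⁻¹' Set.Iic (D/4) with hT
  have hTclosed : IsClosed T :=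
    hvcont.preimage_isClosed_of_isClosed isClosed_Icc isClosed_Iic
  have hTne : T.Nonempty := ⟨1, ⟨Set.right_mem_Icc.2 zero_le_one, by
    simp only [Set.mem_preimage, Set.mem_Iic, hv1]; positivity⟩⟩
  have hTbdd : BddBelow T := ⟨0, fun t ht => ht.1.1⟩
  set tb := sInf T with htb
  have htbT : tb ∈ T := hTclosed.csInf_mem hTne hTbdd
  have htb01 : tb ∈ Set.Icc (0:ℝ) 1 := htbT.1
  have hvtb_le : v tb ≤ D/4 := htbT.2
  have htb_pos : 0 < tb := by
    rcases lt_or_eq_of_le htb01.1 with h | h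
    · exact h
    · exfalso
      rw [← h] at hvtb_le
      rw [hv0] at hvtb_le
      linarith
  have hbefore : ∀ t ∈ Set.Icc (0:ℝ) 1, t < tb → D/4 < v t := by
    intro t ht htlt
    by_contra hle
    push_neg at hle
    have : t ∈ T := ⟨ht, hle⟩
    have := csInf_le hTbdd this
    linarith
  have hvtb_ge : D/4 ≤ v tb := by
    by_contra hlt
    push_neg at hlt
    have hcw : ContinuousWithinAt v (Set.Icc 0 1) tb := hvcont tb htb01
    rw [Metric.continuousWithinAt_iff] at hcw
    obtain ⟨d₀, hd₀, hball⟩ := hcw (D/4 - v tb) (by linarith)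
    set t := max 0 (tb - d₀/2) with htdef
    have ht01 : t ∈ Set.Icc (0:ℝ) 1 := ⟨le_max_left _ _, by
      apply max_le (htb01.1.trans htb01.2)
      linarith [htb01.2]⟩
    have htlt : t < tb := by
      apply max_lt htb_pos
      linarith
    have hdist : dist t tb < d₀ := by
      rw [Real.dist_eq, abs_of_nonpos (by linarith)]
      have h1 : tb - d₀/2 ≤ t := le_max_right _ _
      linarith
    have := hball ht01 hdist
    rw [Real.dist_eq] at this
    have hvt := hbefore t ht01 htlt
    have habs : v t - v tb ≤ |v t - v tb| := le_abs_self _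
    linarith
  have hvtb : v tb = D/4 := le_antisymm hvtb_le hvtb_ge
  have hutb : 3*D/4 ≤ u tb := by
    have := htri tb
    linarith
  -- define ta
  set S : Set ℝ := Set.Icc (0:ℝ) tb ∩ u ⁻¹' Set.Iic (D/4) with hS
  have hsub : Set.Icc (0:ℝ) tb ⊆ Set.Icc (0:ℝ) 1 := Set.Icc_subset_Icc le_rfl htb01.2
  have hSclosed : IsClosed S :=
    (hucont.mono hsub).preimage_isClosed_of_isClosed isClosed_Icc isClosed_Iic
  have hSne : S.Nonempty := ⟨0, ⟨Set.left_mem_Icc.2 htb01.1, by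
    simp only [Set.mem_preimage, Set.mem_Iic, hu0]; positivity⟩⟩
  have hSbdd : BddAbove S := ⟨tb, fun t ht => ht.1.2⟩
  set ta := sSup S with hta
  have htaS : ta ∈ S := hSclosed.csSup_mem hSne hSbdd
  have hta0tb : ta ∈ Set.Icc (0:ℝ) tb := htaS.1
  have huta_le : u ta ≤ D/4 := htaS.2
  have hta_lt : ta < tb := by
    rcases lt_or_eq_of_le hta0tb.2 with h | h
    · exact h
    · exfalso
      rw [h] at huta_le
      linarith
  have hafter : ∀ t ∈ Set.Icc (0:ℝ) tb, ta < t → D/4 < u t := by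
    intro t ht htgt
    by_contra hle
    push_neg at hle
    have : t ∈ S := ⟨ht, hle⟩
    have := le_csSup hSbdd this
    linarith
  have huta_ge : D/4 ≤ u ta := by
    by_contra hlt
    push_neg at hlt
    have hcw : ContinuousWithinAt u (Set.Icc 0 tb) ta := (hucont.mono hsub) ta hta0tb
    rw [Metric.continuousWithinAt_iff] at hcw
    obtain ⟨d₀, hd₀, hball⟩ := hcw (D/4 - u ta) (by linarith)
    set t := min tb (ta + d₀/2) with htdef
    have ht0tb : t ∈ Set.Icc (0:ℝ) tb := by
      constructor
      · rw [htdef]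
        apply le_min htb01.1
        linarith [hta0tb.1]
      · rw [htdef]
        exact min_le_left _ _
    have htgt : ta < t := by
      apply lt_min hta_lt
      linarith
    have hdist : dist t ta < d₀ := by
      rw [Real.dist_eq, abs_of_nonneg (by linarith)]
      have h1 : t ≤ ta + d₀/2 := min_le_right _ _
      linarith
    have := hball ht0tb hdist
    rw [Real.dist_eq] at this
    have hut := hafter t ht0tb htgt
    have habs : u t - u ta ≤ |u t - u ta| := le_abs_self _
    linarith
  have huta : u ta = D/4 := le_antisymm huta_le huta_ge
  refine ⟨ta, tb, hta0tb.1, hta_lt.le, htb01.2, huta, hvtb, ?_⟩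
  intro t ht
  constructor
  · rcases eq_or_lt_of_le ht.1 with h | h
    · rw [← h]; exact huta_ge
    · exact (hafter t ⟨hta0tb.1.trans ht.1, ht.2⟩ h).le
  · rcases eq_or_lt_of_le ht.2 with h | h
    · rw [h]; exact hvtb_ge
    · refine (hbefore t ⟨hta0tb.1.trans ht.1, ht.2.trans htb01.2⟩ h).le

end Aux7
section Aux8

variable {Ω : Set (Eu n)}

set_option maxHeartbeats 2000000 in
lemma main_exists {ε δ : ℝ} (hε : 0 < ε) (hΩ : IsDom Ω) (hJ : IsEpsDeltaDomain Ω ε δ)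
    {x y : Eu n} (hx : x ∈ Ω) (hy : y ∈ Ω) (hxy : dist x y < δ) :
    ∃ γ : ℝ → Eu n, IsCurve Ω γ x y ∧ lineIntegral (fun w => (dOm Ω w)⁻¹) γ ≤
      (2*(ε⁻¹*(1+4*ε⁻¹+2*ε⁻¹^2)) + 16*ε⁻¹^2 + 6*(ε⁻¹*(18*ε⁻¹+72*ε⁻¹^3)) + 1)
        * (jDist Ω x y + 1) := by
  set A₀ : ℝ := ε⁻¹*(1+4*ε⁻¹+2*ε⁻¹^2) with hA₀
  set A₁ : ℝ := ε⁻¹*(18*ε⁻¹+72*ε⁻¹^3) with hA₁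
  set C : ℝ := 2*A₀ + 16*ε⁻¹^2 + 6*A₁ + 1 with hC
  have hA₀nn : 0 ≤ A₀ := by rw [hA₀]; positivity
  have hA₁nn : 0 ≤ A₁ := by rw [hA₁]; positivity
  have hdx : 0 < dOm Ω x := dOm_pos hΩ hx
  have hdy : 0 < dOm Ω y := dOm_pos hΩ hy
  set jd : ℝ := jDist Ω x y with hjd
  have hDnn : (0:ℝ) ≤ dist x y := dist_nonneg
  have hjd_nonneg : 0 ≤ jd := by
    rw [hjd, jDist]
    apply mul_nonneg (by norm_num)
    apply Real.log_nonneg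
    have h1 : 0 ≤ dist x y / dOm Ω x := by positivity
    have h2 : 0 ≤ dist x y / dOm Ω y := by positivity
    nlinarith
  have hCpos : 0 < C := by
    rw [hC]
    have : 0 ≤ ε⁻¹^2 := sq_nonneg _
    linarith
  by_cases hxy0 : x = y
  · subst hxy0
    refine ⟨fun _ => x, isCurve_const hx, ?_⟩
    rw [lineIntegral_const]
    exact mul_nonneg hCpos.le (by linarith)
  have hD : 0 < dist x y := dist_pos.mpr hxy0
  set D := dist x y with hDdef
  obtain ⟨γ, hγ, hlen, hlow⟩ := hJ x hx y hy hxy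
  obtain ⟨ta, tb, hta0, htab, htb1, huta, hvtb, hjun⟩ := junction_times hγ hD
  obtain ⟨K, hKγ⟩ := hγ.lipschitz
  have hγcont : ContinuousOn γ (Set.Icc 0 1) := hKγ.continuousOn
  -- junction curve
  have hjun_low : ∀ t ∈ Set.Icc ta tb, ε*D/16 ≤ dOm Ω (γ t) := by
    intro t ht
    have h1 := hlow t ⟨hta0.trans ht.1, ht.2.trans htb1⟩
    obtain ⟨hu4, hv4⟩ := hjun t ht
    have h2 : ε * (D/4 * (D/4)) / D ≤ ε * (dist (γ t) x * dist (γ t) y) / D := by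
      gcongr <;> positivity
    have h3 : ε * (D/4 * (D/4)) / D = ε*D/16 := by field_simp; ring
    linarith
  obtain ⟨cJ, hcJ, hcJb⟩ := subcurve hΩ hγ hta0 htab htb1 (by positivity : (0:ℝ) < ε*D/16)
    hjun_low
  have hcJb' : lineIntegral (fun w => (dOm Ω w)⁻¹) cJ ≤ 16*ε⁻¹^2 := by
    have h1 : (ε*D/16)⁻¹ * arclength γ ≤ (ε*D/16)⁻¹ * (ε⁻¹*D) :=
      mul_le_mul_of_nonneg_left hlen (by positivity)
    have h2 : (ε*D/16)⁻¹ * (ε⁻¹*D) = 16*ε⁻¹^2 := by field_simp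
    linarith
  -- radii
  set r : ℕ → ℝ := fun j => D/4 * (1/2:ℝ)^j with hr
  have hrpos : ∀ j, 0 < r j := fun j => by rw [hr]; positivity
  have hrle : ∀ j, r j ≤ D/4 := by
    intro j
    rw [hr]
    have h1 : ((1:ℝ)/2)^j ≤ 1 := pow_le_one₀ (by norm_num) (by norm_num)
    nlinarith
  have hrsucc : ∀ j, r j = 2 * r (j+1) := by
    intro j
    rw [hr]
    simp only [pow_succ]
    ring
  have hr0 : r 0 = D/4 := by rw [hr]; simp
  -- lower bounds on dOm at chain points
  have hlowx : ∀ s ∈ Set.Icc (0:ℝ) 1, ∀ j : ℕ, dist (γ s) x = r j →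
      (ε/2)*r j ≤ dOm Ω (γ s) := by
    intro s hs j hus
    have h1 := hlow s hs
    have htri : D ≤ dist x (γ s) + dist (γ s) y := dist_triangle x (γ s) y
    rw [dist_comm x (γ s), hus] at htri
    have hv3 : 3*D/4 ≤ dist (γ s) y := by linarith [hrle j]
    have h2 : ε * (r j * (3*D/4)) / D ≤ ε * (dist (γ s) x * dist (γ s) y) / D := by
      rw [hus]
      gcongr <;> first | positivity | exact (hrpos j).le | exact hv3 | linarith
    have h3 : ε * (r j * (3*D/4)) / D = 3/4*(ε * r j) := by field_simp
    linarith [h1, h2, h3, (mul_pos hε (hrpos j)).le]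
  have hlowy : ∀ s ∈ Set.Icc (0:ℝ) 1, ∀ j : ℕ, dist (γ s) y = r j →
      (ε/2)*r j ≤ dOm Ω (γ s) := by
    intro s hs j hvs
    have h1 := hlow s hs
    have htri : D ≤ dist x (γ s) + dist (γ s) y := dist_triangle x (γ s) y
    rw [hvs] at htri
    have hu3 : 3*D/4 ≤ dist (γ s) x := by
      rw [dist_comm]
      linarith [hrle j]
    have h2 : ε * ((3*D/4) * r j) / D ≤ ε * (dist (γ s) x * dist (γ s) y) / D := by
      rw [hvs]
      gcongr <;> first | positivity | exact (hrpos j).le | exact hu3 | linarith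
    have h3 : ε * ((3*D/4) * r j) / D = 3/4*(ε * r j) := by field_simp
    linarith [h1, h2, h3, (mul_pos hε (hrpos j)).le]
  -- chains of points
  have hIVTx : ∀ j : ℕ, ∃ s : ℝ, s ∈ Set.Icc 0 ta ∧ dist (γ s) x = r j ∧ (j = 0 → s = ta) := by
    intro j
    rcases Nat.eq_zero_or_pos j with h0 | hj
    · subst h0
      exact ⟨ta, Set.right_mem_Icc.2 hta0, by rw [hr0]; exact huta, fun _ => rfl⟩
    · have hcont' : ContinuousOn (fun t => dist (γ t) x) (Set.Icc 0 ta) :=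
        (continuous_id.dist continuous_const).comp_continuousOn
          (hγcont.mono (Set.Icc_subset_Icc le_rfl (htab.trans htb1)))
      have hmem : r j ∈ Set.Icc (dist (γ 0) x) (dist (γ ta) x) := by
        rw [hγ.source, dist_self, huta]
        exact ⟨(hrpos j).le, hrle j⟩
      obtain ⟨s, hs, hus⟩ := intermediate_value_Icc hta0 hcont' hmem
      exact ⟨s, hs, hus, fun h0' => absurd h0' (by omega)⟩
  have hIVTy : ∀ j : ℕ, ∃ s : ℝ, s ∈ Set.Icc tb 1 ∧ dist (γ s) y = r j ∧ (j = 0 → s = tb) := by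
    intro j
    rcases Nat.eq_zero_or_pos j with h0 | hj
    · subst h0
      exact ⟨tb, Set.left_mem_Icc.2 htb1, by rw [hr0]; exact hvtb, fun _ => rfl⟩
    · have hcont' : ContinuousOn (fun t => dist (γ t) y) (Set.Icc tb 1) :=
        (continuous_id.dist continuous_const).comp_continuousOn
          (hγcont.mono (Set.Icc_subset_Icc (hta0.trans htab) le_rfl))
      have hmem : r j ∈ Set.Icc (dist (γ 1) y) (dist (γ tb) y) := by
        rw [hγ.target, dist_self, hvtb]
        exact ⟨(hrpos j).le, hrle j⟩
      obtain ⟨s, hs, hus⟩ := intermediate_value_Icc' htb1 hcont' hmem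
      exact ⟨s, hs, hus, fun h0' => absurd h0' (by omega)⟩
  choose sx hsx1 hsx2 hsx3 using hIVTx
  choose sy hsy1 hsy2 hsy3 using hIVTy
  set p : ℕ → Eu n := fun j => γ (sx j) with hp
  set q : ℕ → Eu n := fun j => γ (sy j) with hq
  have hsx01 : ∀ j, sx j ∈ Set.Icc (0:ℝ) 1 :=
    fun j => ⟨(hsx1 j).1, ((hsx1 j).2.trans htab).trans htb1⟩
  have hsy01 : ∀ j, sy j ∈ Set.Icc (0:ℝ) 1 :=
    fun j => ⟨(hta0.trans htab).trans (hsy1 j).1, (hsy1 j).2⟩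
  have hpΩ : ∀ j, p j ∈ Ω := fun j => hγ.mem _ (hsx01 j)
  have hqΩ : ∀ j, q j ∈ Ω := fun j => hγ.mem _ (hsy01 j)
  have hpdist : ∀ j, dist (p j) x = r j := hsx2
  have hqdist : ∀ j, dist (q j) y = r j := hsy2
  have hpd : ∀ j, (ε/2)*r j ≤ dOm Ω (p j) := fun j => hlowx (sx j) (hsx01 j) j (hsx2 j)
  have hqd : ∀ j, (ε/2)*r j ≤ dOm Ω (q j) := fun j => hlowy (sy j) (hsy01 j) j (hsy2 j)
  have hp0 : p 0 = γ ta := by rw [hp]; simp only []; rw [hsx3 0 rfl]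
  have hq0 : q 0 = γ tb := by rw [hq]; simp only []; rw [hsy3 0 rfl]
  -- x-side hops
  have hopx : ∀ j : ℕ, ∃ c : ℝ → Eu n, IsCurve Ω c (p (j+1)) (p j) ∧
      lineIntegral (fun w => (dOm Ω w)⁻¹) c ≤ A₁ := by
    intro j
    have hrj : r j = 2*r (j+1) := hrsucc j
    have hr'pos := hrpos (j+1)
    have hdistp : dist (p (j+1)) (p j) ≤ 3*r (j+1) := by
      calc dist (p (j+1)) (p j) ≤ dist (p (j+1)) x + dist x (p j) := dist_triangle _ _ _
        _ = r (j+1) + r j := by rw [hpdist, dist_comm x (p j), hpdist]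
        _ = 3*r (j+1) := by rw [hrj]; ring
    have hδ' : dist (p (j+1)) (p j) < δ := by
      have h1 : r (j+1) ≤ D/4 := hrle (j+1)
      linarith
    obtain ⟨c, hc, hcb⟩ := hop hΩ hε hJ (hpΩ (j+1)) (hpΩ j) hδ'
      (a := (ε/2)*r (j+1)) (b := (ε/2)*r j)
      (by positivity) (by positivity) (hpd (j+1)) (hpd j)
    refine ⟨c, hc, hcb.trans ?_⟩
    set ℓ := dist (p (j+1)) (p j) with hℓ
    have hℓnn : 0 ≤ ℓ := dist_nonneg
    rw [hA₁]
    apply mul_le_mul_of_nonneg_left ?_ (inv_nonneg.2 hε.le)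
    have t1 : 2*ℓ/((ε/2)*r (j+1)) ≤ 12*ε⁻¹ := by
      rw [div_le_iff₀ (by positivity)]
      have he : 12*ε⁻¹*((ε/2)*r (j+1)) = 6*r (j+1) := by field_simp; ring
      rw [he]
      linarith
    have t2 : 2*ℓ/((ε/2)*r j) ≤ 6*ε⁻¹ := by
      rw [div_le_iff₀ (by positivity)]
      have he : 6*ε⁻¹*((ε/2)*r j) = 3*r j := by field_simp; ring
      rw [he, hrj]
      linarith
    have t3 : 4*ℓ^2/(ε*((ε/2)*r (j+1))*((ε/2)*r j)) ≤ 72*ε⁻¹^3 := by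
      rw [div_le_iff₀ (by positivity)]
      have he : 72*ε⁻¹^3*(ε*((ε/2)*r (j+1))*((ε/2)*r j)) = 18*(r (j+1)*r j) := by
        field_simp; ring
      rw [he, hrj]
      nlinarith
    linarith
  -- y-side hops
  have hopy : ∀ j : ℕ, ∃ c : ℝ → Eu n, IsCurve Ω c (q j) (q (j+1)) ∧
      lineIntegral (fun w => (dOm Ω w)⁻¹) c ≤ A₁ := by
    intro j
    have hrj : r j = 2*r (j+1) := hrsucc j
    have hr'pos := hrpos (j+1)
    have hdistp : dist (q j) (q (j+1)) ≤ 3*r (j+1) := by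
      calc dist (q j) (q (j+1)) ≤ dist (q j) y + dist y (q (j+1)) := dist_triangle _ _ _
        _ = r j + r (j+1) := by rw [hqdist, dist_comm y (q (j+1)), hqdist]
        _ = 3*r (j+1) := by rw [hrj]; ring
    have hδ' : dist (q j) (q (j+1)) < δ := by
      have h1 : r (j+1) ≤ D/4 := hrle (j+1)
      linarith
    obtain ⟨c, hc, hcb⟩ := hop hΩ hε hJ (hqΩ j) (hqΩ (j+1)) hδ'
      (a := (ε/2)*r j) (b := (ε/2)*r (j+1))
      (by positivity) (by positivity) (hqd j) (hqd (j+1))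
    refine ⟨c, hc, hcb.trans ?_⟩
    set ℓ := dist (q j) (q (j+1)) with hℓ
    have hℓnn : 0 ≤ ℓ := dist_nonneg
    rw [hA₁]
    apply mul_le_mul_of_nonneg_left ?_ (inv_nonneg.2 hε.le)
    have t1 : 2*ℓ/((ε/2)*r j) ≤ 6*ε⁻¹ := by
      rw [div_le_iff₀ (by positivity)]
      have he : 6*ε⁻¹*((ε/2)*r j) = 3*r j := by field_simp; ring
      rw [he, hrj]
      linarith
    have t2 : 2*ℓ/((ε/2)*r (j+1)) ≤ 12*ε⁻¹ := by
      rw [div_le_iff₀ (by positivity)]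
      have he : 12*ε⁻¹*((ε/2)*r (j+1)) = 6*r (j+1) := by field_simp; ring
      rw [he]
      linarith
    have t3 : 4*ℓ^2/(ε*((ε/2)*r j)*((ε/2)*r (j+1))) ≤ 72*ε⁻¹^3 := by
      rw [div_le_iff₀ (by positivity)]
      have he : 72*ε⁻¹^3*(ε*((ε/2)*r j)*((ε/2)*r (j+1))) = 18*(r j*r (j+1)) := by
        field_simp; ring
      rw [he, hrj]
      nlinarith
    linarith
  -- number of steps and end hops
  have hlog2pos : (0:ℝ) < Real.log 2 := Real.log_pos one_lt_two
  have hlog2big : (0.6931471803:ℝ) < Real.log 2 := Real.log_two_gt_d9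
  have hlogx : Real.log (1 + D/dOm Ω x) ≤ 2*jd := by
    rw [hjd, jDist, ← hDdef]
    rw [Real.log_mul (by positivity) (by positivity)]
    have h0 : (0:ℝ) ≤ Real.log (1 + D/dOm Ω y) := by
      apply Real.log_nonneg
      have : 0 ≤ D/dOm Ω y := by positivity
      linarith
    linarith
  have hlogy : Real.log (1 + D/dOm Ω y) ≤ 2*jd := by
    rw [hjd, jDist, ← hDdef]
    rw [Real.log_mul (by positivity) (by positivity)]
    have h0 : (0:ℝ) ≤ Real.log (1 + D/dOm Ω x) := by
      apply Real.log_nonneg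
      have : 0 ≤ D/dOm Ω x := by positivity
      linarith
    linarith
  have hJbound : ∀ d : ℝ, 0 < d → Real.log (1 + D/d) ≤ 2*jd →
      ((⌈Real.logb 2 (D / d)⌉₊ : ℝ) ≤ 3*jd + 1 ∧ D ≤ 2^(⌈Real.logb 2 (D / d)⌉₊) * d) := by
    intro d hd hlg
    have hz : 0 < D / d := by positivity
    constructor
    · have ha : (⌈Real.logb 2 (D / d)⌉₊:ℝ) ≤ (⌈max 0 (Real.logb 2 (D / d))⌉₊:ℝ) :=
        Nat.cast_le.2 (Nat.ceil_le_ceil (le_max_right _ _))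
      have hb : (⌈max 0 (Real.logb 2 (D / d))⌉₊:ℝ) < max 0 (Real.logb 2 (D / d)) + 1 :=
        Nat.ceil_lt_add_one (le_max_left _ _)
      have h2 : max 0 (Real.logb 2 (D / d)) ≤ 3*jd := by
        apply max_le (by linarith)
        rw [Real.logb, div_le_iff₀ hlog2pos]
        have hmono : Real.log (D/d) ≤ Real.log (1 + D/d) :=
          Real.log_le_log hz (by linarith)
        nlinarith
      linarith
    · have h1 : Real.logb 2 (D/d) ≤ (⌈Real.logb 2 (D / d)⌉₊:ℝ) := Nat.le_ceil _
      have h2 : D/d = (2:ℝ) ^ Real.logb 2 (D/d) :=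
        (Real.rpow_logb two_pos (by norm_num) hz).symm
      have h3 : (2:ℝ) ^ Real.logb 2 (D/d) ≤ (2:ℝ) ^ ((⌈Real.logb 2 (D / d)⌉₊:ℝ)) :=
        Real.rpow_le_rpow_of_exponent_le one_le_two h1
      have h4 : (2:ℝ) ^ ((⌈Real.logb 2 (D / d)⌉₊:ℝ)) = 2^(⌈Real.logb 2 (D / d)⌉₊) :=
        Real.rpow_natCast 2 _
      have h5 : D/d ≤ 2^(⌈Real.logb 2 (D / d)⌉₊) := by
        calc D/d = (2:ℝ) ^ Real.logb 2 (D/d) := h2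
          _ ≤ (2:ℝ) ^ ((⌈Real.logb 2 (D / d)⌉₊:ℝ)) := h3
          _ = 2^(⌈Real.logb 2 (D / d)⌉₊) := h4
      rw [div_le_iff₀ hd] at h5
      linarith [h5]
  set Jx := ⌈Real.logb 2 (D / dOm Ω x)⌉₊ with hJxdef
  set Jy := ⌈Real.logb 2 (D / dOm Ω y)⌉₊ with hJydef
  obtain ⟨hJxle, hJx2⟩ := hJbound (dOm Ω x) hdx hlogx
  obtain ⟨hJyle, hJy2⟩ := hJbound (dOm Ω y) hdy hlogy
  have hrJbound : ∀ (d : ℝ) (J : ℕ), 0 < d → D ≤ 2^J * d → r J ≤ d/4 := by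
    intro d J hd h2
    rw [hr]
    have hid : ((1:ℝ)/2)^J * 2^J = 1 := by
      rw [← mul_pow]
      norm_num
    have h2pow : (0:ℝ) < 2^J := by positivity
    have hp2 : (0:ℝ) ≤ ((1:ℝ)/2)^J := by positivity
    have h3 := mul_le_mul_of_nonneg_right h2 hp2
    nlinarith
  have hrJx : r Jx ≤ dOm Ω x/4 := hrJbound _ _ hdx hJx2
  have hrJy : r Jy ≤ dOm Ω y/4 := hrJbound _ _ hdy hJy2
  -- end hop bound helper
  have hendbound : ∀ d ℓ : ℝ, 0 < d → 0 < ℓ → ℓ ≤ d/4 →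
      ε⁻¹ * (2*ℓ/d + 2*ℓ/((ε/2)*ℓ) + 4*ℓ^2/(ε*d*((ε/2)*ℓ))) ≤ A₀ := by
    intro d ℓ hd hℓ hℓd
    rw [hA₀]
    apply mul_le_mul_of_nonneg_left ?_ (inv_nonneg.2 hε.le)
    have t1 : 2*ℓ/d ≤ 1 := by
      rw [div_le_iff₀ hd]
      linarith
    have t2 : 2*ℓ/((ε/2)*ℓ) ≤ 4*ε⁻¹ := by
      rw [div_le_iff₀ (by positivity)]
      have he : 4*ε⁻¹*((ε/2)*ℓ) = 2*ℓ := by field_simp; ring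
      rw [he]
    have t3 : 4*ℓ^2/(ε*d*((ε/2)*ℓ)) ≤ 2*ε⁻¹^2 := by
      rw [div_le_iff₀ (by positivity)]
      have he : 2*ε⁻¹^2*(ε*d*((ε/2)*ℓ)) = ℓ*d := by field_simp
      rw [he]
      nlinarith
    linarith
  -- end hop x → p Jx
  have hbasex : ∃ c : ℝ → Eu n, IsCurve Ω c x (p Jx) ∧
      lineIntegral (fun w => (dOm Ω w)⁻¹) c ≤ A₀ := by
    have hdist : dist x (p Jx) = r Jx := by rw [dist_comm]; exact hpdist Jx
    have hδ' : dist x (p Jx) < δ := by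
      rw [hdist]
      have := hrle Jx
      linarith
    obtain ⟨c, hc, hcb⟩ := hop hΩ hε hJ hx (hpΩ Jx) hδ'
      (a := dOm Ω x) (b := (ε/2)*r Jx) hdx (mul_pos (half_pos hε) (hrpos Jx))
      le_rfl (hpd Jx)
    rw [hdist] at hcb
    exact ⟨c, hc, hcb.trans (hendbound (dOm Ω x) (r Jx) hdx (hrpos Jx) hrJx)⟩
  -- end hop q Jy → y
  have hbasey : ∃ c : ℝ → Eu n, IsCurve Ω c (q Jy) y ∧
      lineIntegral (fun w => (dOm Ω w)⁻¹) c ≤ A₀ := by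
    have hdist : dist (q Jy) y = r Jy := hqdist Jy
    have hδ' : dist (q Jy) y < δ := by
      rw [hdist]
      have := hrle Jy
      linarith
    obtain ⟨c, hc, hcb⟩ := hop hΩ hε hJ (hqΩ Jy) hy hδ'
      (a := (ε/2)*r Jy) (b := dOm Ω y) (mul_pos (half_pos hε) (hrpos Jy)) hdy
      (hqd Jy) le_rfl
    rw [hdist] at hcb
    refine ⟨c, hc, hcb.trans ?_⟩
    rw [hA₀]
    apply mul_le_mul_of_nonneg_left ?_ (inv_nonneg.2 hε.le)
    have hρpos := hrpos Jy
    have t1 : 2*r Jy/(dOm Ω y) ≤ 1 := by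
      rw [div_le_iff₀ hdy]
      linarith [hrJy]
    have t2 : 2*r Jy/((ε/2)*r Jy) ≤ 4*ε⁻¹ := by
      rw [div_le_iff₀ (by positivity)]
      have he : 4*ε⁻¹*((ε/2)*r Jy) = 2*r Jy := by field_simp; ring
      rw [he]
    have t3 : 4*(r Jy)^2/(ε*((ε/2)*r Jy)*(dOm Ω y)) ≤ 2*ε⁻¹^2 := by
      rw [div_le_iff₀ (by positivity)]
      have he : 2*ε⁻¹^2*(ε*((ε/2)*r Jy)*(dOm Ω y)) = r Jy*(dOm Ω y) := by field_simp
      rw [he]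
      nlinarith [hrJy]
    linarith
  -- assemble
  obtain ⟨c1, hc1, hc1b⟩ := chain_down hΩ p hopx Jx A₀ hbasex
  obtain ⟨c2, hc2, hc2b⟩ := chain_up hΩ q (hqΩ 0) hA₁nn hopy Jy
  rw [hp0] at hc1
  rw [hq0] at hc2
  have part1 : ∃ c : ℝ → Eu n, IsCurve Ω c x (γ tb) ∧
      lineIntegral (fun w => (dOm Ω w)⁻¹) c ≤ (A₀ + Jx*A₁) + 16*ε⁻¹^2 :=
    curve_trans hΩ ⟨c1, hc1, hc1b⟩ ⟨cJ, hcJ, hcJb'⟩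
  have part2 : ∃ c : ℝ → Eu n, IsCurve Ω c (γ tb) y ∧
      lineIntegral (fun w => (dOm Ω w)⁻¹) c ≤ Jy*A₁ + A₀ :=
    curve_trans hΩ ⟨c2, hc2, hc2b⟩ hbasey
  obtain ⟨cT, hcT, hcTb⟩ := curve_trans hΩ part1 part2
  refine ⟨cT, hcT, hcTb.trans ?_⟩
  -- final arithmetic
  rw [hC]
  have hx1 : (Jx:ℝ)*A₁ ≤ (3*jd+1)*A₁ := mul_le_mul_of_nonneg_right hJxle hA₁nn
  have hy1 : (Jy:ℝ)*A₁ ≤ (3*jd+1)*A₁ := mul_le_mul_of_nonneg_right hJyle hA₁nn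
  have hsq : (0:ℝ) ≤ ε⁻¹^2 := sq_nonneg _
  nlinarith [mul_nonneg hjd_nonneg hA₀nn, mul_nonneg hjd_nonneg hA₁nn,
    mul_nonneg hjd_nonneg hsq]

end Aux8

/-- an `(ε,δ)`-domain is weakly locally quasi-hyperbolically uniform,
via an explicit curve. -/
theorem stmt_2 (n : ℕ) (hn : 1 ≤ n) (ε : ℝ) (hε : 0 < ε) :
    ∃ C : ℝ, 0 < C ∧ ∀ (Ω : Set (Eu n)) (δ : ℝ), IsDom Ω → 0 < δ →
      IsEpsDeltaDomain Ω ε δ → ∀ x ∈ Ω, ∀ y ∈ Ω, dist x y < δ →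
        (∃ γ : ℝ → Eu n, IsCurve Ω γ x y ∧
          lineIntegral (fun z => (dOm Ω z)⁻¹) γ ≤ C * (jDist Ω x y + 1)) ∧
        kDist Ω x y ≤ C * (jDist Ω x y + 1) := by
  refine ⟨2*(ε⁻¹*(1+4*ε⁻¹+2*ε⁻¹^2)) + 16*ε⁻¹^2 + 6*(ε⁻¹*(18*ε⁻¹+72*ε⁻¹^3)) + 1, ?_, ?_⟩
  · have he : (0:ℝ) ≤ ε⁻¹ := inv_nonneg.2 hε.le
    have h2 := sq_nonneg ε⁻¹
    have h3 : (0:ℝ) ≤ ε⁻¹^3 := pow_nonneg he 3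
    nlinarith [mul_nonneg he h2, mul_nonneg he h3, mul_nonneg he he]
  · intro Ω δ hΩ hδ hJ x hx y hy hxy
    obtain ⟨γ, hγ, hb⟩ := main_exists hε hΩ hJ hx hy hxy
    refine ⟨⟨γ, hγ, hb⟩, ?_⟩
    have hbdd : BddBelow {r | ∃ γ' : ℝ → Eu n, IsCurve Ω γ' x y ∧
        r = lineIntegral (fun z => (dOm Ω z)⁻¹) γ'} := by
      refine ⟨0, ?_⟩
      intro s hs
      obtain ⟨γ', hγ', hs'⟩ := hs
      rw [hs']
      exact lineIntegral_nonneg (fun z => inv_nonneg.2 Metric.infDist_nonneg) γ'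
    rw [kDist]
    exact (csInf_le hbdd ⟨γ, hγ, rfl⟩).trans hb
end
end

section
/- Let Ω ⊊ ℝⁿ be an (ε,δ)-domain, let E be a Whitney decomposition of Ω and E′ a Whitney decomposition of Ω′ := (ℝⁿ \ Ω)° (E′ empty if Ω′ is empty). If Q ⊆ ℝⁿ is a dyadic cube with ℓ(Q) < δ, then there is a cube Q₀ ∈ E ∪ E′ with either Q₀ ⊇ Q or Q ⊇ Q₀, and ℓ(Q₀) ≥ (ε/(160√n))·ℓ(Q). -/
open Set Metric MeasureTheory
open scoped ENNReal

noncomputable section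

variable {n : ℕ}

/-! ### Auxiliary lemmas -/

lemma abs_coord_le_dist (x y : Eu n) (i : Fin n) : |x i - y i| ≤ dist x y := by
  rw [EuclideanSpace.dist_eq]
  have h1 : |x i - y i| = Real.sqrt (dist (x i) (y i)^2) := by
    rw [Real.dist_eq, Real.sqrt_sq_eq_abs, abs_abs]
  rw [h1]
  apply Real.sqrt_le_sqrt
  exact Finset.single_le_sum (f := fun j => dist (x j) (y j)^2) (fun j _ => sq_nonneg _)
    (Finset.mem_univ i)

lemma cube_dist_le {a : Eu n} {l : ℝ} (hl : 0 ≤ l) {u v : Eu n} (hu : u ∈ cube a l)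
    (hv : v ∈ cube a l) : dist u v ≤ Real.sqrt n * l := by
  rw [EuclideanSpace.dist_eq]
  have hb : ∀ i ∈ Finset.univ, dist (u i) (v i)^2 ≤ l^2 := by
    intro i _
    have hu' := hu i; have hv' := hv i
    simp only [Set.mem_Icc] at hu' hv'
    rw [Real.dist_eq]
    have h : |u i - v i| ≤ l :=
      abs_sub_le_iff.mpr ⟨by linarith [hu'.2, hv'.1], by linarith [hv'.2, hu'.1]⟩
    nlinarith [abs_nonneg (u i - v i), sq_abs (u i - v i)]
  calc Real.sqrt (∑ i, dist (u i) (v i)^2) ≤ Real.sqrt (∑ _i : Fin n, l^2) :=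
        Real.sqrt_le_sqrt (Finset.sum_le_sum hb)
    _ = Real.sqrt (n * l^2) := by
        rw [Finset.sum_const, Finset.card_univ, Fintype.card_fin, nsmul_eq_mul]
    _ = Real.sqrt n * l := by
        rw [Real.sqrt_mul (by positivity), Real.sqrt_sq hl]

lemma key1D {r : ℝ} (hr : 0 < r) {A C M : ℤ}
    (h1 : (C:ℝ)*r < (A:ℝ)*r + r) (h2 : (A:ℝ)*r < (C:ℝ)*r + (M:ℝ)*r) :
    (C:ℝ)*r ≤ (A:ℝ)*r ∧ (A:ℝ)*r + r ≤ (C:ℝ)*r + (M:ℝ)*r := by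
  have e1 : (C:ℝ)*r < ((A:ℝ)+1)*r := by linarith
  have e2 : (A:ℝ)*r < ((C:ℝ)+(M:ℝ))*r := by linarith
  have h1' : (C:ℝ) < (A:ℝ) + 1 := (mul_lt_mul_iff_of_pos_right hr).mp e1
  have h2' : (A:ℝ) < (C:ℝ) + (M:ℝ) := (mul_lt_mul_iff_of_pos_right hr).mp e2
  have h1z : C ≤ A := by exact_mod_cast Int.lt_add_one_iff.mp (by exact_mod_cast h1')
  have h2z : A + 1 ≤ C + M := by
    have : A < C + M := by exact_mod_cast h2'
    omega
  constructor
  · have : (C:ℝ) ≤ (A:ℝ) := by exact_mod_cast h1z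
    nlinarith
  · have : ((A:ℝ)+1) ≤ (C:ℝ) + (M:ℝ) := by exact_mod_cast h2z
    nlinarith

lemma dyadic_nesting {a b : Eu n} {k k' : ℤ} {m m' : Fin n → ℤ}
    (ham : ∀ i, a i = (m i : ℝ) * 2^(-k)) (hbm : ∀ i, b i = (m' i:ℝ)*2^(-k'))
    {x : Eu n} (hxb : x ∈ cube b (2^(-k')))
    (hxa : ∀ i, a i < x i ∧ x i < a i + 2^(-k)) :
    cube b (2^(-k')) ⊆ cube a (2^(-k)) ∨ cube a (2^(-k)) ⊆ cube b (2^(-k')) := by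
  have two_ne : (2:ℝ) ≠ 0 := two_ne_zero
  rcases le_or_gt k k' with hk | hk
  · left
    set r : ℝ := 2^(-k') with hrdef
    have hr : 0 < r := by positivity
    set M : ℤ := 2^((k'-k).toNat) with hMdef
    have hMr : (M:ℝ) * r = 2^(-k) := by
      have hc : (M:ℝ) = (2:ℝ)^(k'-k) := by
        rw [hMdef]; push_cast
        rw [← zpow_natCast (2:ℝ) ((k'-k).toNat)]
        congr 1; omega
      rw [hc, hrdef, ← zpow_add₀ two_ne]
      congr 1; ring
    intro y hy i
    have hxbi := hxb i; simp only [Set.mem_Icc] at hxbi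
    have hyi := hy i; simp only [Set.mem_Icc] at hyi
    have hxai := hxa i
    have h1 : ((m i * M : ℤ):ℝ)*r < (m' i:ℝ)*r + r := by
      push_cast
      have : (m i : ℝ) * (M:ℝ) * r = a i := by rw [ham i, ← hMr]; ring
      rw [mul_assoc] at this ⊢
      rw [this]
      calc a i < x i := hxai.1
        _ ≤ b i + r := hxbi.2
        _ = (m' i:ℝ)*r + r := by rw [hbm i]
    have h2 : (m' i:ℝ)*r < ((m i * M:ℤ):ℝ)*r + (M:ℝ)*r := by
      push_cast
      have ha' : (m i : ℝ) * (M:ℝ) * r = a i := by rw [ham i, ← hMr]; ring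
      rw [mul_assoc] at ha' ⊢
      rw [ha', hMr]
      calc (m' i:ℝ)*r = b i := (hbm i).symm
        _ ≤ x i := hxbi.1
        _ < a i + 2^(-k) := hxai.2
    obtain ⟨hL, hR⟩ := key1D hr h1 h2
    have ha' : ((m i * M:ℤ):ℝ)*r = a i := by push_cast; rw [ham i, ← hMr]; ring
    have hb' : (m' i:ℝ)*r = b i := (hbm i).symm
    rw [ha', hb'] at hL
    rw [ha', hb', hMr] at hR
    exact ⟨by linarith [hyi.1], by linarith [hyi.2]⟩
  · right
    set r : ℝ := 2^(-k) with hrdef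
    have hr : 0 < r := by positivity
    set M : ℤ := 2^((k-k').toNat) with hMdef
    have hMr : (M:ℝ) * r = 2^(-k') := by
      have hc : (M:ℝ) = (2:ℝ)^(k-k') := by
        rw [hMdef]; push_cast
        rw [← zpow_natCast (2:ℝ) ((k-k').toNat)]
        congr 1; omega
      rw [hc, hrdef, ← zpow_add₀ two_ne]
      congr 1; ring
    intro y hy i
    have hxbi := hxb i; simp only [Set.mem_Icc] at hxbi
    have hyi := hy i; simp only [Set.mem_Icc] at hyi
    have hxai := hxa i
    have hb' : ((m' i * M:ℤ):ℝ)*r = b i := by push_cast; rw [hbm i, ← hMr]; ring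
    have h1 : ((m' i * M : ℤ):ℝ)*r < (m i:ℝ)*r + r := by
      rw [hb']
      calc b i ≤ x i := hxbi.1
        _ < a i + r := hxai.2
        _ = (m i:ℝ)*r + r := by rw [ham i]
    have h2 : (m i:ℝ)*r < ((m' i * M:ℤ):ℝ)*r + (M:ℝ)*r := by
      rw [hb', hMr]
      calc (m i:ℝ)*r = a i := (ham i).symm
        _ < x i := hxai.1
        _ ≤ b i + 2^(-k') := hxbi.2
    obtain ⟨hL, hR⟩ := key1D hr h1 h2
    have ha' : (m i:ℝ)*r = a i := (ham i).symm
    rw [ha', hb'] at hL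
    rw [ha', hb', hMr] at hR
    exact ⟨by linarith [hyi.1], by linarith [hyi.2]⟩

lemma curve_cont {Ω : Set (Eu n)} {γ : ℝ → Eu n} {x y : Eu n} (hc : IsCurve Ω γ x y) :
    ContinuousOn γ (Set.Icc 0 1) := by
  obtain ⟨K, hK⟩ := hc.lipschitz
  exact hK.continuousOn

/-- An equal-distance point on a curve, via IVT. -/
lemma curve_mid {Ω : Set (Eu n)} {γ : ℝ → Eu n} {x y : Eu n} (hc : IsCurve Ω γ x y) :
    ∃ t₀ ∈ Set.Icc (0:ℝ) 1, dist (γ t₀) x = dist (γ t₀) y := by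
  have hcont := curve_cont hc
  set g : ℝ → ℝ := fun t => dist (γ t) x - dist (γ t) y with hg
  have hgc : ContinuousOn g (Set.Icc 0 1) := by
    apply ContinuousOn.sub
    · exact (continuous_id.dist continuous_const).comp_continuousOn hcont
    · exact (continuous_id.dist continuous_const).comp_continuousOn hcont
  have h0 : g 0 = -dist x y := by simp [hg, hc.source, dist_comm]
  have h1 : g 1 = dist x y := by simp [hg, hc.target, dist_comm]
  have hmem : (0:ℝ) ∈ Set.Icc (g 0) (g 1) := by
    rw [h0, h1]
    exact ⟨neg_nonpos.mpr dist_nonneg, dist_nonneg⟩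
  obtain ⟨t₀, ht₀, hgt⟩ := intermediate_value_Icc (by norm_num : (0:ℝ) ≤ 1) hgc hmem
  refine ⟨t₀, ht₀, ?_⟩
  have : dist (γ t₀) x - dist (γ t₀) y = 0 := hgt
  linarith

lemma eps_le_three {Ω : Set (Eu n)} (hΩ : IsDom Ω) {ε δ : ℝ} (hε : 0 < ε) (hδ : 0 < δ)
    (hED : IsEpsDeltaDomain Ω ε δ) : ε ≤ 3 := by
  obtain ⟨hopen, hconn, hne_univ⟩ := hΩ
  obtain ⟨y₀, hy₀⟩ := hconn.nonempty
  have hcne : Ωᶜ.Nonempty := Set.nonempty_compl.mpr hne_univ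
  set ρ : ℝ := infDist y₀ Ωᶜ with hρdef
  have hρpos : 0 < ρ := by
    obtain ⟨r, hr, hball⟩ := Metric.isOpen_iff.mp hopen y₀ hy₀
    have : r ≤ ρ := by
      by_contra h
      push_neg at h
      obtain ⟨w, hw, hdw⟩ := (Metric.infDist_lt_iff hcne).mp h
      exact hw (hball (Metric.mem_ball'.mpr hdw))
    linarith
  have hball : Metric.ball y₀ ρ ⊆ Ω := by
    intro w hw
    by_contra hwc
    exact absurd (Metric.infDist_le_dist_of_mem (s := Ωᶜ) hwc) (by
      rw [Metric.mem_ball, dist_comm] at hw; linarith)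
  obtain ⟨p, hpc, hpd⟩ := isClosed_closure.exists_infDist_eq_dist hcne.closure y₀
  rw [Metric.infDist_closure] at hpd
  have hdyp : dist y₀ p = ρ := hpd.symm
  have hnp : ‖p - y₀‖ = ρ := by rw [← hdyp, dist_eq_norm, norm_sub_rev]
  have hρ0 : ρ ≠ 0 := ne_of_gt hρpos
  set z : ℝ → Eu n := fun s => y₀ + ((ρ - s)/ρ) • (p - y₀) with hz
  have hzy : ∀ s, 0 ≤ s → s ≤ ρ → dist (z s) y₀ = ρ - s := by
    intro s h0 h1
    rw [hz]; dsimp only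
    rw [dist_eq_norm, add_sub_cancel_left, norm_smul, hnp, Real.norm_eq_abs,
      abs_of_nonneg (div_nonneg (by linarith) hρpos.le)]
    field_simp
  have hzp : ∀ s, 0 ≤ s → s ≤ ρ → dist (z s) p = s := by
    intro s h0 h1
    have hid : z s - p = ((ρ - s)/ρ - 1) • (p - y₀) := by
      rw [hz]; dsimp only
      rw [sub_smul, one_smul]
      abel
    have hsc : (ρ - s)/ρ - 1 = -(s/ρ) := by field_simp; ring
    rw [dist_eq_norm, hid, hsc, norm_smul, hnp, Real.norm_eq_abs, abs_neg,
      abs_of_nonneg (div_nonneg h0 hρpos.le)]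
    field_simp
  have hzΩ : ∀ s, 0 < s → s ≤ ρ → z s ∈ Ω := by
    intro s h0 h1
    apply hball
    rw [Metric.mem_ball, hzy s h0.le h1]
    linarith
  have hpfront : p ∈ frontier Ω := by
    rw [frontier_eq_closure_inter_closure]
    refine ⟨?_, hpc⟩
    rw [Metric.mem_closure_iff]
    intro e he
    have hm2 : min (e/2) (ρ/2) ≤ ρ/2 := min_le_right _ _
    have hm1 : min (e/2) (ρ/2) ≤ e/2 := min_le_left _ _
    have hm0 : 0 < min (e/2) (ρ/2) := lt_min (by linarith) (by linarith)
    refine ⟨z (min (e/2) (ρ/2)), hzΩ _ hm0 (by linarith), ?_⟩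
    rw [dist_comm, hzp _ hm0.le (by linarith)]
    linarith
  set η : ℝ := min ρ δ / 2 with hηdef
  have hη0 : 0 < η := by
    have := lt_min hρpos hδ
    positivity
  have hηρ : η ≤ ρ/2 := by
    have := min_le_left ρ δ
    rw [hηdef]; linarith
  have hηδ : η ≤ δ/2 := by
    have := min_le_right ρ δ
    rw [hηdef]; linarith
  set t : ℝ := η/5 with htdef
  have ht0 : 0 < t := by positivity
  have hxΩ : z t ∈ Ω := hzΩ t ht0 (by linarith)
  have hyΩ : z η ∈ Ω := hzΩ η hη0 (by linarith)
  have hdxy : dist (z t) (z η) = η - t := by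
    have hid : z t - z η = ((η - t)/ρ) • (p - y₀) := by
      rw [hz]; dsimp only
      have h' : y₀ + ((ρ - t)/ρ) • (p - y₀) - (y₀ + ((ρ - η)/ρ) • (p - y₀))
          = ((ρ - t)/ρ) • (p - y₀) - ((ρ - η)/ρ) • (p - y₀) := by abel
      rw [h', ← sub_smul]
      congr 1
      field_simp
      ring
    rw [dist_eq_norm, hid, norm_smul, hnp, Real.norm_eq_abs,
      abs_of_nonneg (div_nonneg (by linarith) hρpos.le)]
    field_simp
  have hD : dist (z t) (z η) = 4*η/5 := by rw [hdxy, htdef]; ring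
  have hDδ : dist (z t) (z η) < δ := by rw [hD]; linarith
  obtain ⟨γ, hγ, _, hcigar⟩ := hED (z t) hxΩ (z η) hyΩ hDδ
  obtain ⟨t₀, ht₀, hmid⟩ := curve_mid hγ
  set w := γ t₀ with hw
  set u := dist w (z t) with hu
  have hu2 : dist (z t) (z η) ≤ 2 * u := by
    calc dist (z t) (z η) ≤ dist (z t) w + dist w (z η) := dist_triangle _ _ _
      _ = 2 * u := by rw [dist_comm (z t) w, ← hmid]; ring
  have hdw : dOm Ω w ≤ t + u := by
    calc dOm Ω w ≤ dOm Ω (z t) + dist w (z t) := Metric.infDist_le_infDist_add_dist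
      _ ≤ dist (z t) p + u := by
          have := Metric.infDist_le_dist_of_mem (x := z t) hpfront
          rw [hu]; exact add_le_add this le_rfl
      _ = t + u := by rw [hzp t ht0.le (by linarith)]
  have hcig := hcigar t₀ ht₀
  rw [← hw, ← hmid, ← hu] at hcig
  have hD0 : 0 < dist (z t) (z η) := by rw [hD]; positivity
  have hkey : ε * (u * u) ≤ (t + u) * dist (z t) (z η) := by
    have := (div_le_iff₀ hD0).mp (le_trans hcig hdw)
    linarith
  have hupos : 0 < u := by
    rw [hD] at hu2; linarith
  have hu2' : 2 * t ≤ u := by rw [hD] at hu2; rw [htdef] at *; linarith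
  have h3 : ε * (u*u) ≤ 3 * (u*u) := by
    have hDt : dist (z t) (z η) = 4 * t := by rw [hD, htdef]; ring
    rw [hDt] at hkey
    nlinarith
  have : 0 < u * u := by positivity
  exact le_of_mul_le_mul_right (by linarith) this

/-- The key geometric claim: every cube of sidelength `< δ` contains an interior point
deep inside `Ω` or deep inside `Ω' = (Ωᶜ)°`. -/
lemma key_point (hn : 1 ≤ n) {Ω : Set (Eu n)} (hΩ : IsDom Ω) {ε δ : ℝ} (hε : 0 < ε)
    (hδ : 0 < δ) (hED : IsEpsDeltaDomain Ω ε δ) (a : Eu n) {l : ℝ} (hl0 : 0 < l)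
    (hl : l < δ) :
    ∃ x : Eu n, (∀ i, a i < x i ∧ x i < a i + l) ∧
      ((x ∈ Ω ∧ ε*l/32 ≤ infDist x (frontier Ω)) ∨
       (x ∈ interior Ωᶜ ∧ ε*l/32 ≤ infDist x (frontier (interior Ωᶜ)))) := by
  have hεle := eps_le_three hΩ hε hδ hED
  obtain ⟨hopen, hconn, hne_univ⟩ := hΩ
  obtain ⟨y₀, hy₀⟩ := hconn.nonempty
  have hfne : (frontier Ω).Nonempty := nonempty_frontier_iff.mpr ⟨⟨y₀, hy₀⟩, hne_univ⟩
  set c : Eu n := WithLp.toLp 2 (fun i : Fin n => a i + l/2) with hc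
  have hcc : ∀ i, c i = a i + l/2 := fun _ => rfl
  have hstrict : ∀ (w : Eu n), dist w c < l/2 → ∀ i, a i < w i ∧ w i < a i + l := by
    intro w hw i
    have h1 := abs_coord_le_dist w c i
    have h3 : |w i - c i| < l/2 := lt_of_le_of_lt h1 hw
    rw [abs_lt] at h3
    have h2 := hcc i
    constructor <;> linarith [h3.1, h3.2]
  have hfront' : frontier (interior Ωᶜ) ⊆ frontier Ω := by
    calc frontier (interior Ωᶜ) ⊆ frontier (Ωᶜ) := frontier_interior_subset
      _ = frontier Ω := frontier_compl Ω
  have hΩ'ne_univ : interior Ωᶜ ≠ univ := by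
    intro h
    have : y₀ ∈ Ωᶜ := interior_subset (h ▸ Set.mem_univ y₀)
    exact this hy₀
  -- packaging for the Ω' case
  have hpack : ∀ q : Eu n, q ∉ closure Ω → ε*l/32 ≤ infDist q (frontier Ω) →
      q ∈ interior Ωᶜ ∧ ε*l/32 ≤ infDist q (frontier (interior Ωᶜ)) := by
    intro q hq hqd
    have hq' : q ∈ interior Ωᶜ := by
      rw [interior_compl]
      exact hq
    have hf'ne : (frontier (interior Ωᶜ)).Nonempty :=
      nonempty_frontier_iff.mpr ⟨⟨q, hq'⟩, hΩ'ne_univ⟩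
    exact ⟨hq', le_trans hqd (Metric.infDist_le_infDist_of_subset hfront' hf'ne)⟩
  rcases le_or_gt (l/8) (infDist c (frontier Ω)) with hD | hD
  · -- center is deep
    by_cases hcΩ : c ∈ Ω
    · exact ⟨c, hstrict c (by rw [dist_self]; linarith), Or.inl ⟨hcΩ, by nlinarith⟩⟩
    · have hqnc : c ∉ closure Ω := by
        intro hcl
        have : c ∈ frontier Ω := by
          rw [hopen.frontier_eq]
          exact ⟨hcl, hcΩ⟩
        have := Metric.infDist_zero_of_mem this
        rw [this] at hD
        linarith
      refine ⟨c, hstrict c (by rw [dist_self]; linarith), Or.inr (hpack c hqnc (by nlinarith))⟩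
  · -- center is close to the boundary
    obtain ⟨p, hp, hpd⟩ := (Metric.infDist_lt_iff hfne).mp hD
    have hpcl : p ∈ closure Ω := frontier_subset_closure hp
    obtain ⟨x, hxΩ, hxd⟩ := Metric.mem_closure_iff.mp hpcl (l/64) (by linarith)
    set d : ℝ := l/8 with hd
    have hd0 : 0 < d := by rw [hd]; linarith
    by_cases hbig : ∃ w ∈ Ω, d ≤ dist w x
    · -- points of Ω far from x exist: run a curve and take midpoint
      obtain ⟨w, hwΩ, hwd⟩ := hbig
      have hcontd : ContinuousOn (fun v => dist v x) Ω :=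
        (continuous_id.dist continuous_const).continuousOn
      have hIVT := hconn.isPreconnected.intermediate_value hxΩ hwΩ hcontd
      have : d ∈ Set.Icc (dist x x) (dist w x) := by
        rw [dist_self]
        exact ⟨hd0.le, hwd⟩
      obtain ⟨y, hyΩ, hyd⟩ := hIVT this
      have hdist_xy : dist x y = d := by rw [dist_comm]; exact hyd
      have hdxyδ : dist x y < δ := by rw [hdist_xy, hd]; linarith
      obtain ⟨γ, hγ, _, hcigar⟩ := hED x hxΩ y hyΩ hdxyδ
      -- crossing point at distance d/2 from x
      have hcont := curve_cont hγ
      have hgc : ContinuousOn (fun t => dist (γ t) x) (Set.Icc 0 1) :=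
        (continuous_id.dist continuous_const).comp_continuousOn hcont
      have h0 : dist (γ 0) x = 0 := by rw [hγ.source, dist_self]
      have h1 : dist (γ 1) x = d := by rw [hγ.target]; exact hyd
      have hmem : d/2 ∈ Set.Icc (dist (γ 0) x) (dist (γ 1) x) := by
        rw [h0, h1]
        constructor <;> linarith
      obtain ⟨t₁, ht₁, hzt⟩ := intermediate_value_Icc (by norm_num : (0:ℝ) ≤ 1) hgc hmem
      set z := γ t₁ with hzdef
      have hzx : dist z x = d/2 := hzt
      have hzΩ : z ∈ Ω := hγ.mem t₁ ht₁
      have hzy : d/2 ≤ dist z y := by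
        have htri := dist_triangle x z y
        rw [hdist_xy] at htri
        rw [dist_comm x z, hzx] at htri
        linarith
      have hcig := hcigar t₁ ht₁
      rw [← hzdef] at hcig
      have hbound : ε*l/32 ≤ dOm Ω z := by
        refine le_trans ?_ hcig
        have hzy' : l/16 ≤ dist z y := by
          have h' := hzy
          rw [hd] at h'
          linarith
        rw [hdist_xy, hzx, le_div_iff₀ hd0, hd]
        nlinarith [mul_le_mul_of_nonneg_left hzy' (mul_nonneg hε.le (by linarith : (0:ℝ) ≤ l/16)),
          hε.le, hl0.le]
      have hzc : dist z c < l/2 := by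
        calc dist z c ≤ dist z x + dist x c := dist_triangle _ _ _
          _ ≤ dist z x + (dist x p + dist p c) := by linarith [dist_triangle x p c]
          _ < l/16 + (l/64 + l/8) := by
              rw [hzx, hd]
              have hxp : dist x p < l/64 := by rw [dist_comm]; exact hxd
              have hpc : dist p c < l/8 := by rw [dist_comm]; exact hpd
              linarith
          _ < l/2 := by linarith
      exact ⟨z, hstrict z hzc, Or.inl ⟨hzΩ, hbound⟩⟩
    · -- Ω is entirely within distance d of x: go to the other side
      push_neg at hbig
      set i₀ : Fin n := ⟨0, hn⟩ with hi₀
      set q : Eu n := c + (7*l/16) • EuclideanSpace.single i₀ (1:ℝ) with hq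
      have hqc : dist q c = 7*l/16 := by
        rw [hq, dist_eq_norm, add_sub_cancel_left, norm_smul, EuclideanSpace.norm_single]
        rw [Real.norm_eq_abs, norm_one, abs_of_nonneg (by linarith), mul_one]
      have hxc : dist x c < 9*l/64 := by
        calc dist x c ≤ dist x p + dist p c := dist_triangle _ _ _
          _ < l/64 + l/8 := by
              have hxp : dist x p < l/64 := by rw [dist_comm]; exact hxd
              have hpc : dist p c < l/8 := by rw [dist_comm]; exact hpd
              linarith
          _ = 9*l/64 := by ring
      have hqx : 19*l/64 ≤ dist q x := by
        have htri := dist_triangle q x c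
        linarith [hqc ▸ htri]
      have hqw : ∀ w ∈ Ω, 11*l/64 ≤ dist q w := by
        intro w hw
        have htri := dist_triangle q w x
        have hwx := hbig w hw
        rw [hd] at hwx
        linarith
      have hqΩ : 11*l/64 ≤ infDist q Ω := by
        by_contra h
        push_neg at h
        obtain ⟨w, hw, hdw⟩ := (Metric.infDist_lt_iff ⟨x, hxΩ⟩).mp h
        exact absurd (hqw w hw) (by linarith)
      have hqnc : q ∉ closure Ω := by
        intro hcl
        have h0 : infDist q (closure Ω) = 0 := Metric.infDist_zero_of_mem hcl
        rw [Metric.infDist_closure] at h0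
        rw [h0] at hqΩ
        linarith
      have hqfr : ε*l/32 ≤ infDist q (frontier Ω) := by
        have h1 : infDist q (closure Ω) ≤ infDist q (frontier Ω) :=
          Metric.infDist_le_infDist_of_subset frontier_subset_closure hfne
        rw [Metric.infDist_closure] at h1
        nlinarith
      refine ⟨q, hstrict q (by rw [hqc]; linarith), Or.inr (hpack q hqnc hqfr)⟩

lemma main_aux {O : Set (Eu n)} {W : Set (Eu n × ℝ)} (hW : IsWhitney O W)
    {x : Eu n} (hxO : x ∈ O) {a : Eu n} {l : ℝ} {k : ℤ} {m : Fin n → ℤ}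
    (hlk : l = 2^(-k)) (ham : ∀ i, a i = (m i:ℝ)*2^(-k))
    (hxin : ∀ i, a i < x i ∧ x i < a i + l)
    {b : ℝ} (hb : 0 < b) (hxd : b ≤ infDist x (frontier O)) :
    ∃ q ∈ W, (cube a l ⊆ cube q.1 q.2 ∨ cube q.1 q.2 ⊆ cube a l) ∧
      b ≤ 5 * Real.sqrt n * q.2 := by
  have hfne : (frontier O).Nonempty := by
    rcases Set.eq_empty_or_nonempty (frontier O) with h | h
    · rw [h, Metric.infDist_empty] at hxd; linarith
    · exact h
  have hxcube : x ∈ ⋃ q ∈ W, cube q.1 q.2 := by rw [hW.cover]; exact hxO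
  simp only [Set.mem_iUnion] at hxcube
  obtain ⟨q, hqW, hxq⟩ := hxcube
  obtain ⟨k', m', hq2, hq1⟩ := hW.dyadic q hqW
  have hq2pos : 0 < q.2 := by rw [hq2]; positivity
  refine ⟨q, hqW, ?_, ?_⟩
  · subst hlk
    rw [hq2] at hxq ⊢
    exact (dyadic_nesting ham hq1 hxq hxin).symm
  · have hup : setDist (cube q.1 q.2) (frontier O) ≤ 4 * Real.sqrt n * q.2 :=
      hW.distUpper q hqW
    have hlow : b - Real.sqrt n * q.2 ≤ setDist (cube q.1 q.2) (frontier O) := by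
      apply le_csInf (Set.Nonempty.image2 ⟨x, hxq⟩ hfne)
      rintro r ⟨u, hu, w, hw, rfl⟩
      have h1 : b ≤ dist x w := le_trans hxd (Metric.infDist_le_dist_of_mem hw)
      have h2 : dist x u ≤ Real.sqrt n * q.2 := cube_dist_le hq2pos.le hxq hu
      have h3 := dist_triangle x u w
      linarith
    linarith

/-- every dyadic cube of sidelength `< δ` is comparable to a
Whitney cube of `Ω` or of `Ω' = (ℝⁿ \ Ω)°`. -/
theorem stmt_6 (n : ℕ) (hn : 1 ≤ n) (Ω : Set (Eu n)) (hΩ : IsDom Ω)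
    (ε δ : ℝ) (hε : 0 < ε) (hδ : 0 < δ) (hED : IsEpsDeltaDomain Ω ε δ)
    (E E' : Set (Eu n × ℝ)) (hE : IsWhitney Ω E) (hE' : IsWhitney (interior Ωᶜ) E')
    (a : Eu n) (l : ℝ) (hdy : IsDyadic a l) (hl : l < δ) :
    ∃ q ∈ E ∪ E', (cube a l ⊆ cube q.1 q.2 ∨ cube q.1 q.2 ⊆ cube a l) ∧
      ε / (160 * Real.sqrt n) * l ≤ q.2 := by
  obtain ⟨k, m, hlk, ham⟩ := hdy
  have hl0 : 0 < l := by rw [hlk]; positivity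
  obtain ⟨x, hxin, hcase⟩ := key_point hn hΩ hε hδ hED a hl0 hl
  have hb : 0 < ε*l/32 := by positivity
  have hn' : (0:ℝ) < n := by exact_mod_cast Nat.lt_of_lt_of_le Nat.zero_lt_one hn
  have hsn : 0 < Real.sqrt n := Real.sqrt_pos.mpr hn'
  have hfinal : ∀ s : ℝ, ε*l/32 ≤ 5 * Real.sqrt n * s → ε / (160 * Real.sqrt n) * l ≤ s := by
    intro s hs
    rw [div_mul_eq_mul_div, div_le_iff₀ (by positivity)]
    nlinarith
  rcases hcase with ⟨hxO, hxd⟩ | ⟨hxO, hxd⟩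
  · obtain ⟨q, hqW, hnest, hsize⟩ := main_aux hE hxO hlk ham hxin hb hxd
    exact ⟨q, Set.mem_union_left _ hqW, hnest, hfinal _ hsize⟩
  · obtain ⟨q, hqW, hnest, hsize⟩ := main_aux hE' hxO hlk ham hxin hb hxd
    exact ⟨q, Set.mem_union_right _ hqW, hnest, hfinal _ hsize⟩
end
end

section
/- Let λ > 0 and f ∈ L¹_loc(ℝⁿ). Define a_f := sup over all dyadic cubes Q of (1/|Q|)∫_Q |f − f_Q|; b_f := sup of |f_{Q₁} − f_{Q₂}| over all pairs of dyadic cubes Q₁, Q₂ with ℓ(Q₁) = ℓ(Q₂) and Q₁ ∩ Q₂ ≠ ∅; and c_f := sup of |f_Q| over all dyadic cubes Q with ℓ(Q) ≥ λ/(16√n). Then ‖f‖_{bmo_λ(ℝⁿ)} ≤ C·(a_f + b_f + c_f) for a constant C depending only on n. -/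
open Set Metric MeasureTheory
open scoped ENNReal

noncomputable section

variable {n : ℕ}

lemma dyCube_eq_cube (k : ℤ) (m : Fin n → ℤ) :
    dyCube k m = cube (WithLp.toLp 2 (fun i => (m i : ℝ) * 2 ^ (-k) : Fin n → ℝ)) (2 ^ (-k)) := rfl

lemma cube_eq_preimage (a : Eu n) (l : ℝ) :
    cube a l = (MeasurableEquiv.toLp 2 (Fin n → ℝ)).symm ⁻¹'
      (Set.univ.pi fun i => Icc (a i) (a i + l)) := by
  ext x
  simp [cube, Set.mem_pi, Pi.le_def, forall_and]

lemma volume_cube (a : Eu n) (l : ℝ) :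
    volume (cube a l) = ENNReal.ofReal l ^ n := by
  rw [cube_eq_preimage,
    (EuclideanSpace.volume_preserving_symm_measurableEquiv_toLp (Fin n)).measure_preimage
      ((MeasurableSet.univ_pi fun i => measurableSet_Icc).nullMeasurableSet)]
  simp [Real.volume_Icc_pi]

lemma isCompact_cube (a : Eu n) (l : ℝ) : IsCompact (cube a l) := by
  have h : cube a l = (EuclideanSpace.equiv (Fin n) ℝ).toHomeomorph ⁻¹'
      (Set.univ.pi fun i => Icc (a i) (a i + l)) := by
    ext x; simp [cube, Set.mem_pi, EuclideanSpace.equiv, Pi.le_def, forall_and]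
  rw [h, Homeomorph.isCompact_preimage]
  exact isCompact_univ_pi fun i => isCompact_Icc

lemma two_zpow_pos (k : ℤ) : (0:ℝ) < 2 ^ (-k) := zpow_pos (by norm_num) _

lemma cube_subset_union (a : Eu n) (l : ℝ) (k : ℤ) (hlk : l ≤ 2 ^ (-k)) :
    cube a l ⊆ ⋃ b : Fin n → Bool,
      dyCube k (fun i => ⌊a i / 2 ^ (-k)⌋ + if b i then 1 else 0) := by
  intro x hx
  have hh0 : (0:ℝ) < 2 ^ (-k) := two_zpow_pos k
  refine Set.mem_iUnion.2
    ⟨fun i => decide (((⌊a i / 2 ^ (-k)⌋ : ℝ) + 1) * 2 ^ (-k) < x i), ?_⟩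
  intro i
  show x i ∈ Set.Icc
      (((⌊a i / 2 ^ (-k)⌋ +
        if (decide (((⌊a i / 2 ^ (-k)⌋ : ℝ) + 1) * 2 ^ (-k) < x i)) = true
        then (1:ℤ) else 0 : ℤ) : ℝ) * 2 ^ (-k))
      (((⌊a i / 2 ^ (-k)⌋ +
        if (decide (((⌊a i / 2 ^ (-k)⌋ : ℝ) + 1) * 2 ^ (-k) < x i)) = true
        then (1:ℤ) else 0 : ℤ) : ℝ) * 2 ^ (-k) + 2 ^ (-k))
  simp only [decide_eq_true_eq]
  set H : ℝ := 2 ^ (-k) with hH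
  set F : ℤ := ⌊a i / H⌋ with hF
  have h1 : (F : ℝ) * H ≤ a i := by
    rw [← le_div_iff₀ hh0]; exact Int.floor_le _
  have h2 : a i ≤ ((F : ℝ) + 1) * H := by
    rw [← div_le_iff₀ hh0]; exact (Int.lt_floor_add_one _).le
  have hxl : a i ≤ x i ∧ x i ≤ a i + l := hx i
  by_cases hc : ((F : ℝ) + 1) * H < x i
  · rw [if_pos hc]
    constructor
    · push_cast; nlinarith
    · push_cast; nlinarith
  · rw [if_neg hc]
    constructor
    · push_cast; nlinarith
    · push_cast; nlinarith

lemma dyCube_inter_nonempty (k : ℤ) (m0 : Fin n → ℤ) (b : Fin n → Bool) :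
    (dyCube k (fun i => m0 i + if b i then 1 else 0) ∩ dyCube k m0).Nonempty := by
  have hh0 : (0:ℝ) < 2 ^ (-k) := two_zpow_pos k
  refine ⟨WithLp.toLp 2 (fun i => ((m0 i : ℝ) + 1) * 2 ^ (-k) : Fin n → ℝ), ?_, ?_⟩
  · intro i
    show ((m0 i : ℝ) + 1) * 2 ^ (-k) ∈ Set.Icc
        (((m0 i + if b i = true then (1:ℤ) else 0 : ℤ) : ℝ) * 2 ^ (-k))
        (((m0 i + if b i = true then (1:ℤ) else 0 : ℤ) : ℝ) * 2 ^ (-k) + 2 ^ (-k))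
    by_cases hb : b i = true
    · rw [if_pos hb]
      constructor
      · push_cast; nlinarith
      · push_cast; nlinarith
    · rw [if_neg hb]
      constructor
      · push_cast; nlinarith
      · push_cast; nlinarith
  · intro i
    show ((m0 i : ℝ) + 1) * 2 ^ (-k) ∈ Set.Icc ((m0 i : ℝ) * 2 ^ (-k))
        ((m0 i : ℝ) * 2 ^ (-k) + 2 ^ (-k))
    constructor
    · nlinarith
    · nlinarith

lemma exists_k (l : ℝ) (hl : 0 < l) : ∃ k : ℤ, l ≤ 2 ^ (-k) ∧ (2:ℝ) ^ (-k) ≤ 2 * l := by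
  refine ⟨-(Int.log 2 l + 1), ?_, ?_⟩
  · rw [neg_neg]
    exact_mod_cast (Int.lt_zpow_succ_log_self (by norm_num) l).le
  · rw [neg_neg, zpow_add_one₀ (by norm_num)]
    have h := Int.zpow_log_le_self (b := 2) (by norm_num) hl
    have h2 : ((2:ℕ):ℝ) ^ Int.log 2 l = (2:ℝ) ^ Int.log 2 l := by norm_num
    rw [h2] at h
    linarith

lemma mo_nonneg (f : Eu n → ℝ) (Q : Set (Eu n)) : 0 ≤ mo f Q := by
  rw [mo, setAverage_eq]
  exact smul_nonneg (by positivity) (integral_nonneg fun x => abs_nonneg _)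

lemma abs_avg_sub_le (f : Eu n → ℝ) (Q : Set (Eu n)) (h0 : volume Q ≠ 0) (ht : volume Q ≠ ⊤)
    (hf : IntegrableOn f Q) (c : ℝ) :
    |avg f Q - c| ≤ ⨍ x in Q, |f x - c| := by
  have hv : 0 < (volume Q).toReal := ENNReal.toReal_pos h0 ht
  rw [avg, setAverage_eq, setAverage_eq, smul_eq_mul, smul_eq_mul, measureReal_def]
  have hint : ∫ x in Q, (f x - c) = (∫ x in Q, f x) - (volume Q).toReal * c := by
    rw [integral_sub hf (integrableOn_const ht), setIntegral_const,
      smul_eq_mul, measureReal_def]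
  have h1 : (volume Q).toReal⁻¹ * (∫ x in Q, f x) - c
      = (volume Q).toReal⁻¹ * ∫ x in Q, (f x - c) := by
    rw [hint]; field_simp
  rw [h1, abs_mul, abs_inv, abs_of_pos hv]
  refine mul_le_mul_of_nonneg_left ?_ (by positivity)
  calc |∫ x in Q, (f x - c)| ≤ ∫ x in Q, |f x - c| := by
        simpa [Real.norm_eq_abs] using
          norm_integral_le_integral_norm (μ := volume.restrict Q) (fun x => f x - c)
    _ ≤ ∫ x in Q, |f x - c| := le_rfl

lemma integral_abs_sub_avg (f : Eu n → ℝ) (Q : Set (Eu n)) (h0 : volume Q ≠ 0)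
    (ht : volume Q ≠ ⊤) :
    ∫ x in Q, |f x - avg f Q| = (volume Q).toReal * mo f Q := by
  have hv : 0 < (volume Q).toReal := ENNReal.toReal_pos h0 ht
  rw [mo, setAverage_eq, smul_eq_mul, measureReal_def]
  field_simp

lemma integral_abs_sub_le (f : Eu n → ℝ) (R : Set (Eu n)) (h0 : volume R ≠ 0)
    (ht : volume R ≠ ⊤) (hR : MeasurableSet R) (hf : IntegrableOn f R) (c : ℝ) :
    ∫ x in R, |f x - c| ≤ (volume R).toReal * (mo f R + |avg f R - c|) := by
  have hconst : IntegrableOn (fun _ : Eu n => avg f R - c) R :=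
    integrableOn_const ht
  have int1 : IntegrableOn (fun x => |f x - c|) R :=
    ((hf.sub (integrableOn_const ht)).abs)
  have int2 : IntegrableOn (fun x => |f x - avg f R| + |avg f R - c|) R :=
    ((hf.sub (integrableOn_const ht)).abs).add
      (integrableOn_const ht)
  calc ∫ x in R, |f x - c|
      ≤ ∫ x in R, (|f x - avg f R| + |avg f R - c|) := by
        refine integral_mono int1 int2 fun x => ?_
        exact abs_sub_le (f x) (avg f R) c
    _ = (∫ x in R, |f x - avg f R|) + ∫ x in R, (fun _ : Eu n => |avg f R - c|) x := by
        have intavg : IntegrableOn (fun x => |f x - avg f R|) R :=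
          (hf.sub (integrableOn_const ht)).abs
        have hc2 : IntegrableOn (fun _ : Eu n => |avg f R - c|) R :=
          integrableOn_const ht
        exact integral_add intavg hc2
    _ = (∫ x in R, |f x - avg f R|) + (volume R).toReal * |avg f R - c| := by
        rw [setIntegral_const, smul_eq_mul, measureReal_def]
    _ = (volume R).toReal * (mo f R + |avg f R - c|) := by
        rw [integral_abs_sub_avg f R h0 ht]; ring

lemma mo_le_two_average (f : Eu n → ℝ) (Q : Set (Eu n)) (h0 : volume Q ≠ 0)
    (ht : volume Q ≠ ⊤) (hf : IntegrableOn f Q) (c : ℝ) :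
    mo f Q ≤ 2 * ⨍ x in Q, |f x - c| := by
  have hv : 0 < (volume Q).toReal := ENNReal.toReal_pos h0 ht
  have hconst : IntegrableOn (fun _ : Eu n => c) Q := integrableOn_const ht
  have int1 : IntegrableOn (fun x => |f x - c|) Q := (hf.sub hconst).abs
  have step : ∫ x in Q, |f x - avg f Q| ≤ 2 * ∫ x in Q, |f x - c| := by
    have habs : ∀ x, |f x - avg f Q| ≤ |f x - c| + |avg f Q - c| := fun x => by
      calc |f x - avg f Q| ≤ |f x - c| + |c - avg f Q| := abs_sub_le (f x) c (avg f Q)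
        _ = |f x - c| + |avg f Q - c| := by rw [abs_sub_comm c]
    have int2 : IntegrableOn (fun x => |f x - c| + |avg f Q - c|) Q :=
      int1.add (integrableOn_const ht)
    have intavg : IntegrableOn (fun x => |f x - avg f Q|) Q :=
      (hf.sub (integrableOn_const ht)).abs
    have h2 : (volume Q).toReal * |avg f Q - c| ≤ ∫ x in Q, |f x - c| := by
      have := abs_avg_sub_le f Q h0 ht hf c
      rw [setAverage_eq, smul_eq_mul, measureReal_def] at this
      calc (volume Q).toReal * |avg f Q - c|
          ≤ (volume Q).toReal * ((volume Q).toReal⁻¹ * ∫ x in Q, |f x - c|) :=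
            mul_le_mul_of_nonneg_left this hv.le
        _ = ∫ x in Q, |f x - c| := by field_simp
    calc ∫ x in Q, |f x - avg f Q|
        ≤ ∫ x in Q, (|f x - c| + |avg f Q - c|) := integral_mono intavg int2 habs
      _ = (∫ x in Q, |f x - c|) + ∫ x in Q, (fun _ : Eu n => |avg f Q - c|) x := by
          have hc2 : IntegrableOn (fun _ : Eu n => |avg f Q - c|) Q :=
            integrableOn_const ht
          exact integral_add int1 hc2
      _ = (∫ x in Q, |f x - c|) + (volume Q).toReal * |avg f Q - c| := by
          rw [setIntegral_const, smul_eq_mul, measureReal_def]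
      _ ≤ 2 * ∫ x in Q, |f x - c| := by linarith
  rw [mo, setAverage_eq, setAverage_eq, smul_eq_mul, smul_eq_mul, measureReal_def]
  calc (volume Q).toReal⁻¹ * ∫ x in Q, |f x - avg f Q|
      ≤ (volume Q).toReal⁻¹ * (2 * ∫ x in Q, |f x - c|) :=
        mul_le_mul_of_nonneg_left step (by positivity)
    _ = 2 * ((volume Q).toReal⁻¹ * ∫ x in Q, |f x - c|) := by ring

lemma abs_avg_le (f : Eu n → ℝ) (Q : Set (Eu n)) (h0 : volume Q ≠ 0)
    (ht : volume Q ≠ ⊤) (hf : IntegrableOn f Q) (c : ℝ) :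
    |avg f Q| ≤ (⨍ x in Q, |f x - c|) + |c| := by
  have h := abs_avg_sub_le f Q h0 ht hf c
  calc |avg f Q| ≤ |avg f Q - c| + |c| := by
        simpa using abs_add_le (avg f Q - c) c
    _ ≤ (⨍ x in Q, |f x - c|) + |c| := by linarith
lemma dyCube_nonempty (k : ℤ) (m : Fin n → ℤ) : (dyCube k m).Nonempty := by
  have hh0 : (0:ℝ) < 2 ^ (-k) := two_zpow_pos k
  refine ⟨WithLp.toLp 2 (fun i => (m i : ℝ) * 2 ^ (-k) : Fin n → ℝ), fun i => ?_⟩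
  show (m i : ℝ) * 2 ^ (-k) ∈ Set.Icc ((m i : ℝ) * 2 ^ (-k)) ((m i : ℝ) * 2 ^ (-k) + 2 ^ (-k))
  exact ⟨le_rfl, by nlinarith⟩

lemma volume_dyCube (k : ℤ) (m : Fin n → ℤ) :
    volume (dyCube k m) = ENNReal.ofReal (2 ^ (-k)) ^ n := by
  rw [dyCube_eq_cube, volume_cube]

lemma isCompact_dyCube (k : ℤ) (m : Fin n → ℤ) : IsCompact (dyCube k m) := by
  rw [dyCube_eq_cube]; exact isCompact_cube _ _

lemma volume_cube_ne_zero (a : Eu n) {l : ℝ} (hl : 0 < l) : volume (cube a l) ≠ 0 := by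
  rw [volume_cube]
  exact pow_ne_zero _ (by simp [ENNReal.ofReal_eq_zero, not_le, hl])

lemma volume_cube_ne_top (a : Eu n) (l : ℝ) : volume (cube a l) ≠ ⊤ := by
  rw [volume_cube]
  exact ENNReal.pow_ne_top ENNReal.ofReal_ne_top

lemma volume_cube_toReal (a : Eu n) {l : ℝ} (hl : 0 ≤ l) :
    (volume (cube a l)).toReal = l ^ n := by
  rw [volume_cube, ENNReal.toReal_pow, ENNReal.toReal_ofReal hl]

lemma core_bound (f : Eu n → ℝ) (hf : LocallyIntegrable f volume) (a : Eu n) {l : ℝ}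
    (hl : 0 < l) {k : ℤ} (hlk : l ≤ 2 ^ (-k)) (hkl : (2:ℝ) ^ (-k) ≤ 2 * l)
    {A B : ℝ}
    (hA : ∀ m : Fin n → ℤ, mo f (dyCube k m) ≤ A)
    (hB : ∀ m m' : Fin n → ℤ, (dyCube k m ∩ dyCube k m').Nonempty →
      |avg f (dyCube k m) - avg f (dyCube k m')| ≤ B) :
    ⨍ x in cube a l, |f x - avg f (dyCube k (fun i => ⌊a i / 2 ^ (-k)⌋))| ≤ 4 ^ n * (A + B) := by
  have hh0 : (0:ℝ) < 2 ^ (-k) := two_zpow_pos k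
  set m0 : Fin n → ℤ := fun i => ⌊a i / 2 ^ (-k)⌋ with hm0
  set c : ℝ := avg f (dyCube k m0) with hc
  have hA0 : 0 ≤ A := le_trans (mo_nonneg f _) (hA m0)
  have hB0 : 0 ≤ B := by
    have := hB m0 m0 (by rw [Set.inter_self]; exact dyCube_nonempty k m0)
    have h2 := abs_nonneg (avg f (dyCube k m0) - avg f (dyCube k m0))
    linarith
  -- per-cube bound
  have hvolR : ∀ m : Fin n → ℤ, volume (dyCube k m) ≠ 0 ∧ volume (dyCube k m) ≠ ⊤ := by
    intro m
    rw [volume_dyCube]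
    constructor
    · exact pow_ne_zero _ (ne_of_gt (ENNReal.ofReal_pos.2 hh0))
    · exact ENNReal.pow_ne_top ENNReal.ofReal_ne_top
  have hfR : ∀ m : Fin n → ℤ, IntegrableOn f (dyCube k m) := fun m =>
    hf.integrableOn_isCompact (isCompact_dyCube k m)
  have hRtoReal : ∀ m : Fin n → ℤ, (volume (dyCube k m)).toReal = (2 ^ (-k) : ℝ) ^ n := by
    intro m
    rw [dyCube_eq_cube, volume_cube_toReal _ hh0.le]
  have perCube : ∀ b : Fin n → Bool,
      ∫ x in dyCube k (fun i => m0 i + if b i then 1 else 0), |f x - c|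
        ≤ (2 ^ (-k) : ℝ) ^ n * (A + B) := by
    intro b
    set m : Fin n → ℤ := fun i => m0 i + if b i then 1 else 0 with hm
    have h1 := integral_abs_sub_le f (dyCube k m) (hvolR m).1 (hvolR m).2
      (isCompact_dyCube k m).isClosed.measurableSet (hfR m) c
    have h2 : |avg f (dyCube k m) - c| ≤ B := hB m m0 (dyCube_inter_nonempty k m0 b)
    have h3 : mo f (dyCube k m) ≤ A := hA m
    calc ∫ x in dyCube k m, |f x - c|
        ≤ (volume (dyCube k m)).toReal * (mo f (dyCube k m) + |avg f (dyCube k m) - c|) := h1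
      _ ≤ (volume (dyCube k m)).toReal * (A + B) := by
          refine mul_le_mul_of_nonneg_left (by linarith) ENNReal.toReal_nonneg
      _ = (2 ^ (-k) : ℝ) ^ n * (A + B) := by rw [hRtoReal m]
  -- integrability on the cube Q
  have hfQ : IntegrableOn f (cube a l) := hf.integrableOn_isCompact (isCompact_cube a l)
  have intQ : IntegrableOn (fun x => |f x - c|) (cube a l) :=
    (hfQ.sub (integrableOn_const (volume_cube_ne_top a l))).abs
  -- ENNReal chain
  have chain : ENNReal.ofReal (∫ x in cube a l, |f x - c|)
      ≤ ENNReal.ofReal ((2:ℝ) ^ n * ((2 ^ (-k) : ℝ) ^ n * (A + B))) := by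
    calc ENNReal.ofReal (∫ x in cube a l, |f x - c|)
        = ∫⁻ x in cube a l, ENNReal.ofReal |f x - c| := by
          exact ofReal_integral_eq_lintegral_ofReal intQ
            (Filter.Eventually.of_forall fun x => abs_nonneg _)
      _ ≤ ∫⁻ x in ⋃ b : Fin n → Bool,
            dyCube k (fun i => m0 i + if b i then 1 else 0), ENNReal.ofReal |f x - c| := by
          exact lintegral_mono_set (by simpa [hm0] using cube_subset_union a l k hlk)
      _ ≤ ∑' b : Fin n → Bool,
            ∫⁻ x in dyCube k (fun i => m0 i + if b i then 1 else 0),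
              ENNReal.ofReal |f x - c| := lintegral_iUnion_le _ _
      _ = ∑ b : Fin n → Bool,
            ∫⁻ x in dyCube k (fun i => m0 i + if b i then 1 else 0),
              ENNReal.ofReal |f x - c| := tsum_fintype _
      _ ≤ ∑ b : Fin n → Bool, ENNReal.ofReal ((2 ^ (-k) : ℝ) ^ n * (A + B)) := by
          refine Finset.sum_le_sum fun b _ => ?_
          set m : Fin n → ℤ := fun i => m0 i + if b i then 1 else 0 with hm
          have intR : IntegrableOn (fun x => |f x - c|) (dyCube k m) :=
            ((hfR m).sub (integrableOn_const (hvolR m).2)).abs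
          rw [← ofReal_integral_eq_lintegral_ofReal intR
            (Filter.Eventually.of_forall fun x => abs_nonneg _)]
          exact ENNReal.ofReal_le_ofReal (perCube b)
      _ = (Fintype.card (Fin n → Bool)) •
            ENNReal.ofReal ((2 ^ (-k) : ℝ) ^ n * (A + B)) := by
          rw [Finset.sum_const, Finset.card_univ]
      _ = ENNReal.ofReal ((2:ℝ) ^ n * ((2 ^ (-k) : ℝ) ^ n * (A + B))) := by
          have hcard : Fintype.card (Fin n → Bool) = 2 ^ n := by simp
          rw [nsmul_eq_mul, hcard,
            show ((2 ^ n : ℕ) : ℝ≥0∞) = ENNReal.ofReal ((2:ℝ) ^ n) by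
              rw [← ENNReal.ofReal_natCast]; norm_num,
            ← ENNReal.ofReal_mul (by positivity)]
  have hreal : ∫ x in cube a l, |f x - c| ≤ (2:ℝ) ^ n * ((2 ^ (-k) : ℝ) ^ n * (A + B)) :=
    (ENNReal.ofReal_le_ofReal_iff (by positivity)).1 chain
  -- conclude
  have hln : (0:ℝ) < l ^ n := by positivity
  rw [setAverage_eq, smul_eq_mul, measureReal_def, volume_cube_toReal a hl.le]
  have hpow : ((2:ℝ) ^ (-k)) ^ n ≤ (2 * l) ^ n := pow_le_pow_left₀ hh0.le hkl n
  calc (l ^ n)⁻¹ * ∫ x in cube a l, |f x - c|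
      ≤ (l ^ n)⁻¹ * ((2:ℝ) ^ n * ((2 ^ (-k) : ℝ) ^ n * (A + B))) := by
        exact mul_le_mul_of_nonneg_left hreal (by positivity)
    _ ≤ (l ^ n)⁻¹ * ((2:ℝ) ^ n * ((2 * l) ^ n * (A + B))) := by
        refine mul_le_mul_of_nonneg_left ?_ (by positivity)
        refine mul_le_mul_of_nonneg_left ?_ (by positivity)
        exact mul_le_mul_of_nonneg_right hpow (by linarith)
    _ = (l ^ n)⁻¹ * ((2:ℝ) ^ n * ((2 ^ n * l ^ n) * (A + B))) := by rw [mul_pow]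
    _ = ((2:ℝ) ^ n * 2 ^ n) * (A + B) * ((l ^ n)⁻¹ * l ^ n) := by ring
    _ = 4 ^ n * (A + B) := by
        rw [inv_mul_cancel₀ (ne_of_gt hln), ← mul_pow]
        norm_num

lemma small_bound (f : Eu n → ℝ) (hf : LocallyIntegrable f volume)
    (S1 S2 : ℝ≥0∞)
    (hS1 : ∀ (k : ℤ) (m : Fin n → ℤ), ENNReal.ofReal (mo f (dyCube k m)) ≤ S1)
    (hS2 : ∀ (k : ℤ) (m m' : Fin n → ℤ), (dyCube k m ∩ dyCube k m').Nonempty →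
      ENNReal.ofReal |avg f (dyCube k m) - avg f (dyCube k m')| ≤ S2)
    (a : Eu n) {l : ℝ} (hl : 0 < l) :
    ENNReal.ofReal (mo f (cube a l)) ≤ ENNReal.ofReal (2 * 4 ^ n) * (S1 + S2) := by
  by_cases htop : S1 + S2 = ⊤
  · rw [htop, ENNReal.mul_top (ENNReal.ofReal_pos.2 (by positivity)).ne']
    exact le_top
  have hS1t : S1 ≠ ⊤ := fun h => htop (by simp [h])
  have hS2t : S2 ≠ ⊤ := fun h => htop (by simp [h])
  obtain ⟨k, hlk, hkl⟩ := exists_k l hl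
  have hA : ∀ m : Fin n → ℤ, mo f (dyCube k m) ≤ S1.toReal := fun m =>
    (ENNReal.ofReal_le_iff_le_toReal hS1t).1 (hS1 k m)
  have hB : ∀ m m' : Fin n → ℤ, (dyCube k m ∩ dyCube k m').Nonempty →
      |avg f (dyCube k m) - avg f (dyCube k m')| ≤ S2.toReal := fun m m' hne =>
    (ENNReal.ofReal_le_iff_le_toReal hS2t).1 (hS2 k m m' hne)
  have hcore := core_bound f hf a hl hlk hkl hA hB
  have hmo := mo_le_two_average f (cube a l) (volume_cube_ne_zero a hl) (volume_cube_ne_top a l)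
    (hf.integrableOn_isCompact (isCompact_cube a l))
    (avg f (dyCube k (fun i => ⌊a i / 2 ^ (-k)⌋)))
  have hreal : mo f (cube a l) ≤ 2 * 4 ^ n * (S1.toReal + S2.toReal) := by nlinarith
  calc ENNReal.ofReal (mo f (cube a l))
      ≤ ENNReal.ofReal (2 * 4 ^ n * (S1.toReal + S2.toReal)) := ENNReal.ofReal_le_ofReal hreal
    _ = ENNReal.ofReal (2 * 4 ^ n) * ENNReal.ofReal (S1.toReal + S2.toReal) :=
        ENNReal.ofReal_mul (by positivity)
    _ ≤ ENNReal.ofReal (2 * 4 ^ n) * (S1 + S2) := by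
        refine mul_le_mul_right ?_ _
        rw [ENNReal.ofReal_add ENNReal.toReal_nonneg ENNReal.toReal_nonneg]
        exact add_le_add ENNReal.ofReal_toReal_le ENNReal.ofReal_toReal_le

lemma large_bound (hn : 1 ≤ n) (f : Eu n → ℝ) (hf : LocallyIntegrable f volume)
    {lam : ℝ} (hlam : 0 < lam) (S1 S2 S3 : ℝ≥0∞)
    (hS1 : ∀ (k : ℤ) (m : Fin n → ℤ), ENNReal.ofReal (mo f (dyCube k m)) ≤ S1)
    (hS2 : ∀ (k : ℤ) (m m' : Fin n → ℤ), (dyCube k m ∩ dyCube k m').Nonempty →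
      ENNReal.ofReal |avg f (dyCube k m) - avg f (dyCube k m')| ≤ S2)
    (hS3 : ∀ (k : ℤ) (m : Fin n → ℤ), lam / (16 * Real.sqrt n) ≤ (2:ℝ) ^ (-k) →
      ENNReal.ofReal |avg f (dyCube k m)| ≤ S3)
    (a : Eu n) {l : ℝ} (hl : lam ≤ l) :
    ENNReal.ofReal |avg f (cube a l)| ≤ ENNReal.ofReal (4 ^ n) * (S1 + S2 + S3) := by
  have hl0 : 0 < l := lt_of_lt_of_le hlam hl
  by_cases htop : S1 + S2 + S3 = ⊤
  · rw [htop, ENNReal.mul_top (ENNReal.ofReal_pos.2 (by positivity)).ne']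
    exact le_top
  have hS1t : S1 ≠ ⊤ := fun h => htop (by simp [h])
  have hS2t : S2 ≠ ⊤ := fun h => htop (by simp [h])
  have hS3t : S3 ≠ ⊤ := fun h => htop (by simp [h])
  obtain ⟨k, hlk, hkl⟩ := exists_k l hl0
  have hsqrt : (1:ℝ) ≤ Real.sqrt n := by
    rw [show (1:ℝ) = Real.sqrt 1 by simp]
    exact Real.sqrt_le_sqrt (by exact_mod_cast hn)
  have hcond : lam / (16 * Real.sqrt n) ≤ (2:ℝ) ^ (-k) := by
    have h16 : (1:ℝ) ≤ 16 * Real.sqrt n := by nlinarith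
    have : lam / (16 * Real.sqrt n) ≤ lam := by
      rw [div_le_iff₀ (by linarith)]
      nlinarith
    linarith
  have hA : ∀ m : Fin n → ℤ, mo f (dyCube k m) ≤ S1.toReal := fun m =>
    (ENNReal.ofReal_le_iff_le_toReal hS1t).1 (hS1 k m)
  have hB : ∀ m m' : Fin n → ℤ, (dyCube k m ∩ dyCube k m').Nonempty →
      |avg f (dyCube k m) - avg f (dyCube k m')| ≤ S2.toReal := fun m m' hne =>
    (ENNReal.ofReal_le_iff_le_toReal hS2t).1 (hS2 k m m' hne)
  have hC : |avg f (dyCube k (fun i => ⌊a i / 2 ^ (-k)⌋))| ≤ S3.toReal :=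
    (ENNReal.ofReal_le_iff_le_toReal hS3t).1 (hS3 k _ hcond)
  have hcore := core_bound f hf a hl0 hlk hkl hA hB
  have habs := abs_avg_le f (cube a l) (volume_cube_ne_zero a hl0) (volume_cube_ne_top a l)
    (hf.integrableOn_isCompact (isCompact_cube a l))
    (avg f (dyCube k (fun i => ⌊a i / 2 ^ (-k)⌋)))
  have hreal : |avg f (cube a l)| ≤ 4 ^ n * (S1.toReal + S2.toReal) + S3.toReal := by
    calc |avg f (cube a l)|
        ≤ (⨍ x in cube a l, |f x - avg f (dyCube k (fun i => ⌊a i / 2 ^ (-k)⌋))|) +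
            |avg f (dyCube k (fun i => ⌊a i / 2 ^ (-k)⌋))| := habs
      _ ≤ 4 ^ n * (S1.toReal + S2.toReal) + S3.toReal := add_le_add hcore hC
  calc ENNReal.ofReal |avg f (cube a l)|
      ≤ ENNReal.ofReal (4 ^ n * (S1.toReal + S2.toReal) + S3.toReal) :=
        ENNReal.ofReal_le_ofReal hreal
    _ ≤ ENNReal.ofReal (4 ^ n * (S1.toReal + S2.toReal)) + ENNReal.ofReal S3.toReal :=
        ENNReal.ofReal_add_le
    _ ≤ ENNReal.ofReal (4 ^ n) * (S1 + S2) + S3 := by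
        refine add_le_add ?_ ENNReal.ofReal_toReal_le
        rw [ENNReal.ofReal_mul (by positivity)]
        refine mul_le_mul_right ?_ _
        rw [ENNReal.ofReal_add ENNReal.toReal_nonneg ENNReal.toReal_nonneg]
        exact add_le_add ENNReal.ofReal_toReal_le ENNReal.ofReal_toReal_le
    _ ≤ ENNReal.ofReal (4 ^ n) * (S1 + S2) + ENNReal.ofReal (4 ^ n) * S3 := by
        refine add_le_add le_rfl ?_
        refine le_mul_of_one_le_left zero_le ?_
        rw [show (1:ℝ≥0∞) = ENNReal.ofReal 1 by simp]
        exact ENNReal.ofReal_le_ofReal (one_le_pow₀ (by norm_num))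
    _ = ENNReal.ofReal (4 ^ n) * (S1 + S2 + S3) := by ring


/-- the `bmo_lam(ℝⁿ)` norm is controlled by dyadic data. -/
theorem stmt_10 (n : ℕ) (hn : 1 ≤ n) :
    ∃ C : ℝ, 0 < C ∧ ∀ lam : ℝ, 0 < lam → ∀ f : Eu n → ℝ,
      LocallyIntegrable f volume →
      bmoNorm Set.univ lam f ≤ ENNReal.ofReal C *
        ((⨆ (k : ℤ) (m : Fin n → ℤ), ENNReal.ofReal (mo f (dyCube k m))) +
         (⨆ (k : ℤ) (m : Fin n → ℤ) (m' : Fin n → ℤ)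
            (_ : (dyCube k m ∩ dyCube k m').Nonempty),
            ENNReal.ofReal |avg f (dyCube k m) - avg f (dyCube k m')|) +
         (⨆ (k : ℤ) (m : Fin n → ℤ) (_ : lam / (16 * Real.sqrt n) ≤ (2:ℝ) ^ (-k)),
            ENNReal.ofReal |avg f (dyCube k m)|)) := by
  refine ⟨3 * 4 ^ n, by positivity, ?_⟩
  intro lam hlam f hf
  set S1 := ⨆ (k : ℤ) (m : Fin n → ℤ), ENNReal.ofReal (mo f (dyCube k m)) with hS1def
  set S2 := ⨆ (k : ℤ) (m : Fin n → ℤ) (m' : Fin n → ℤ)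
      (_ : (dyCube k m ∩ dyCube k m').Nonempty),
      ENNReal.ofReal |avg f (dyCube k m) - avg f (dyCube k m')| with hS2def
  set S3 := ⨆ (k : ℤ) (m : Fin n → ℤ) (_ : lam / (16 * Real.sqrt n) ≤ (2:ℝ) ^ (-k)),
      ENNReal.ofReal |avg f (dyCube k m)| with hS3def
  have hS1 : ∀ (k : ℤ) (m : Fin n → ℤ), ENNReal.ofReal (mo f (dyCube k m)) ≤ S1 := by
    intro k m
    rw [hS1def]
    exact le_iSup₂ (f := fun (k : ℤ) (m : Fin n → ℤ) => ENNReal.ofReal (mo f (dyCube k m))) k m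
  have hS2 : ∀ (k : ℤ) (m m' : Fin n → ℤ), (dyCube k m ∩ dyCube k m').Nonempty →
      ENNReal.ofReal |avg f (dyCube k m) - avg f (dyCube k m')| ≤ S2 := by
    intro k m m' hne
    rw [hS2def]
    exact le_iSup₂_of_le (f := fun (k : ℤ) (m : Fin n → ℤ) => ⨆ (m' : Fin n → ℤ)
      (_ : (dyCube k m ∩ dyCube k m').Nonempty),
      ENNReal.ofReal |avg f (dyCube k m) - avg f (dyCube k m')|) k m
      (le_iSup₂_of_le m' hne le_rfl)
  have hS3 : ∀ (k : ℤ) (m : Fin n → ℤ), lam / (16 * Real.sqrt n) ≤ (2:ℝ) ^ (-k) →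
      ENNReal.ofReal |avg f (dyCube k m)| ≤ S3 := by
    intro k m hcond
    rw [hS3def]
    exact le_iSup₂_of_le (f := fun (k : ℤ) (m : Fin n → ℤ) => ⨆ (_ : lam / (16 * Real.sqrt n) ≤ (2:ℝ) ^ (-k)),
      ENNReal.ofReal |avg f (dyCube k m)|) k m (le_iSup_of_le hcond le_rfl)
  have part1 : (⨆ (a : Eu n) (l : ℝ) (_ : 0 < l) (_ : l < lam) (_ : cube a l ⊆ Set.univ),
      ENNReal.ofReal (mo f (cube a l))) ≤ ENNReal.ofReal (2 * 4 ^ n) * (S1 + S2 + S3) := by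
    refine iSup_le fun a => iSup_le fun l => iSup_le fun hl => iSup_le fun _ =>
      iSup_le fun _ => ?_
    refine le_trans (small_bound f hf S1 S2 hS1 hS2 a hl) (mul_le_mul_right ?_ _)
    exact self_le_add_right _ _
  have part2 : (⨆ (a : Eu n) (l : ℝ) (_ : lam ≤ l) (_ : cube a l ⊆ Set.univ),
      ENNReal.ofReal |avg f (cube a l)|) ≤ ENNReal.ofReal (4 ^ n) * (S1 + S2 + S3) := by
    refine iSup_le fun a => iSup_le fun l => iSup_le fun hl => iSup_le fun _ => ?_
    exact large_bound hn f hf hlam S1 S2 S3 hS1 hS2 hS3 a hl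
  have final : bmoNorm Set.univ lam f
      ≤ ENNReal.ofReal (2 * 4 ^ n) * (S1 + S2 + S3) +
        ENNReal.ofReal (4 ^ n) * (S1 + S2 + S3) := add_le_add part1 part2
  refine final.trans (le_of_eq ?_)
  rw [← add_mul, ← ENNReal.ofReal_add (by positivity) (by positivity)]
  congr 2
  ring
end
end
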